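/- arXiv:1906.08540 — 8 statements merged into one kernel-verified Lean document; each statement's English description precedes it below -/
import Mathlib

section
/- Screening test (Lemma 1): Let (u*, v*) be any minimizer of Ψ_κ over the feasible set F. Then for every index i with μ_i < (ε²/κ)·r_i(K) one has e^{u*_i} = ε/κ, and for every index j with ν_j < κε²·c_j(K) one has e^{v*_j} = εκ. -/
open scoped Classical

lemma screening_aux (A c b a : ℝ) (hb : 0 < b) (hba : b ≤ a) (hc : 0 ≤ c)
    (hcb : c < A * b)
    (h : A * a - c * Real.log a ≤ A * b - c * Real.log b) : a = b := by
  by_contra hne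
  have hba' : b < a := lt_of_le_of_ne hba (Ne.symm hne)
  have hapos : 0 < a := lt_trans hb hba'
  have hlog : Real.log a - Real.log b ≤ (a - b) / b := by
    have h1 : Real.log (a / b) ≤ a / b - 1 :=
      Real.log_le_sub_one_of_pos (div_pos hapos hb)
    rw [Real.log_div (ne_of_gt hapos) (ne_of_gt hb)] at h1
    have h2 : a / b - 1 = (a - b) / b := by field_simp
    linarith
  have h2 : c * Real.log a - c * Real.log b ≤ c * ((a - b) / b) := by
    have := mul_le_mul_of_nonneg_left hlog hc
    nlinarith
  have hpos : 0 < (a - b) / b := div_pos (sub_pos.mpr hba') hb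
  have h3 : c * ((a - b) / b) < (A * b) * ((a - b) / b) :=
    mul_lt_mul_of_pos_right hcb hpos
  have h4 : (A * b) * ((a - b) / b) = A * (a - b) := by field_simp
  have h5 : A * (a - b) = A * a - A * b := by ring
  linarith

theorem screening_test
    (n m : ℕ) (hn : 0 < n) (hm : 0 < m)
    (C : Fin n → Fin m → ℝ) (hC : ∀ i j, 0 ≤ C i j)
    (η : ℝ) (hη : 0 < η)
    (K : Fin n → Fin m → ℝ) (hK : ∀ i j, K i j = Real.exp (-(C i j) / η))
    (μ : Fin n → ℝ) (ν : Fin m → ℝ)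
    (hμpos : ∀ i, 0 < μ i) (hνpos : ∀ j, 0 < ν j)
    (hμsum : ∑ i, μ i = 1) (hνsum : ∑ j, ν j = 1)
    (ε κ : ℝ) (hε : 0 < ε) (hκ : 0 < κ)
    (ustar : Fin n → ℝ) (vstar : Fin m → ℝ)
    (hufeas : ∀ i, ε / κ ≤ Real.exp (ustar i))
    (hvfeas : ∀ j, ε * κ ≤ Real.exp (vstar j))
    (hmin : ∀ (u : Fin n → ℝ) (v : Fin m → ℝ),
      (∀ i, ε / κ ≤ Real.exp (u i)) → (∀ j, ε * κ ≤ Real.exp (v j)) →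
      (∑ i, ∑ j, Real.exp (ustar i) * K i j * Real.exp (vstar j))
          - κ * (∑ i, ustar i * μ i) - (1 / κ) * (∑ j, vstar j * ν j)
        ≤ (∑ i, ∑ j, Real.exp (u i) * K i j * Real.exp (v j))
          - κ * (∑ i, u i * μ i) - (1 / κ) * (∑ j, v j * ν j)) :
    (∀ i, μ i < ε ^ 2 / κ * (∑ j, K i j) → Real.exp (ustar i) = ε / κ) ∧
    (∀ j, ν j < κ * ε ^ 2 * (∑ i, K i j) → Real.exp (vstar j) = ε * κ) := by
  have hKpos : ∀ i j, 0 < K i j := by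
    intro i j; rw [hK]; exact Real.exp_pos _
  constructor
  · intro i hi
    have hbpos : (0:ℝ) < ε / κ := div_pos hε hκ
    set L := Real.log (ε / κ) with hL
    have heL : Real.exp L = ε / κ := Real.exp_log hbpos
    set u' := Function.update ustar i L with hu'
    have hfeas' : ∀ i', ε / κ ≤ Real.exp (u' i') := by
      intro i'
      rcases eq_or_ne i' i with h | h
      · subst h; rw [hu', Function.update_self, heL]
      · rw [hu', Function.update_of_ne h]; exact hufeas i'
    have H := hmin u' vstar hfeas' hvfeas
    set A := ∑ j, K i j * Real.exp (vstar j) with hA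
    have hrow : ∀ t : ℝ, ∑ j, Real.exp t * K i j * Real.exp (vstar j)
        = Real.exp t * A := by
      intro t; rw [hA, Finset.mul_sum]
      exact Finset.sum_congr rfl fun j _ => by ring
    have hsum : ∑ i', ∑ j, Real.exp (u' i') * K i' j * Real.exp (vstar j)
        = (∑ i', ∑ j, Real.exp (ustar i') * K i' j * Real.exp (vstar j))
          - Real.exp (ustar i) * A + (ε / κ) * A := by
      rw [← Finset.add_sum_erase _ _ (Finset.mem_univ i),
          ← Finset.add_sum_erase _
            (fun i' => ∑ j, Real.exp (ustar i') * K i' j * Real.exp (vstar j))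
            (Finset.mem_univ i)]
      have he : ∑ i' ∈ Finset.univ.erase i,
            ∑ j, Real.exp (u' i') * K i' j * Real.exp (vstar j)
          = ∑ i' ∈ Finset.univ.erase i,
            ∑ j, Real.exp (ustar i') * K i' j * Real.exp (vstar j) := by
        refine Finset.sum_congr rfl fun x hx => ?_
        rw [hu', Function.update_of_ne (Finset.ne_of_mem_erase hx)]
      rw [he, hu', Function.update_self, hrow L, hrow (ustar i), heL]
      ring
    have hμeq : ∑ i', u' i' * μ i'
        = (∑ i', ustar i' * μ i') - ustar i * μ i + L * μ i := by
      rw [← Finset.add_sum_erase _ _ (Finset.mem_univ i),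
          ← Finset.add_sum_erase _ (fun i' => ustar i' * μ i') (Finset.mem_univ i)]
      have he : ∑ i' ∈ Finset.univ.erase i, u' i' * μ i'
          = ∑ i' ∈ Finset.univ.erase i, ustar i' * μ i' := by
        refine Finset.sum_congr rfl fun x hx => ?_
        rw [hu', Function.update_of_ne (Finset.ne_of_mem_erase hx)]
      rw [he, hu', Function.update_self]
      ring
    rw [hsum, hμeq] at H
    have key : A * Real.exp (ustar i) - (κ * μ i) * Real.log (Real.exp (ustar i))
        ≤ A * (ε / κ) - (κ * μ i) * Real.log (ε / κ) := by
      rw [Real.log_exp, ← hL]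
      nlinarith [H]
    have hAS : ε * κ * (∑ j, K i j) ≤ A := by
      have h1 : ε * κ * (∑ j, K i j) = ∑ j, K i j * (ε * κ) := by
        rw [Finset.mul_sum]; exact Finset.sum_congr rfl fun j _ => by ring
      rw [h1, hA]
      exact Finset.sum_le_sum fun j _ =>
        mul_le_mul_of_nonneg_left (hvfeas j) (le_of_lt (hKpos i j))
    have hi' : κ * μ i < ε ^ 2 * (∑ j, K i j) := by
      rw [div_mul_eq_mul_div, lt_div_iff₀ hκ] at hi; linarith
    have hcb : κ * μ i < A * (ε / κ) := by
      have h3 := mul_le_mul_of_nonneg_right hAS (le_of_lt hbpos)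
      have h4 : ε * κ * (∑ j, K i j) * (ε / κ) = ε ^ 2 * (∑ j, K i j) := by
        field_simp
      linarith
    exact screening_aux A (κ * μ i) (ε / κ) (Real.exp (ustar i)) hbpos
      (hufeas i) (le_of_lt (mul_pos hκ (hμpos i))) hcb key
  · intro j hj
    have hbpos : (0:ℝ) < ε * κ := mul_pos hε hκ
    set L := Real.log (ε * κ) with hL
    have heL : Real.exp L = ε * κ := Real.exp_log hbpos
    set v' := Function.update vstar j L with hv'
    have hfeas' : ∀ j', ε * κ ≤ Real.exp (v' j') := by
      intro j'
      rcases eq_or_ne j' j with h | h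
      · subst h; rw [hv', Function.update_self, heL]
      · rw [hv', Function.update_of_ne h]; exact hvfeas j'
    have H := hmin ustar v' hufeas hfeas'
    set A := ∑ i, Real.exp (ustar i) * K i j with hA
    have hcol : ∀ t : ℝ, ∑ i, Real.exp (ustar i) * K i j * Real.exp t
        = A * Real.exp t := by
      intro t; rw [hA, Finset.sum_mul]
    have hsum : ∑ i, ∑ j', Real.exp (ustar i) * K i j' * Real.exp (v' j')
        = (∑ i, ∑ j', Real.exp (ustar i) * K i j' * Real.exp (vstar j'))
          - A * Real.exp (vstar j) + A * (ε * κ) := by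
      rw [Finset.sum_comm,
          Finset.sum_comm (γ := Fin n)
            (f := fun i j' => Real.exp (ustar i) * K i j' * Real.exp (vstar j'))]
      rw [← Finset.add_sum_erase _ _ (Finset.mem_univ j),
          ← Finset.add_sum_erase _
            (fun j' => ∑ i, Real.exp (ustar i) * K i j' * Real.exp (vstar j'))
            (Finset.mem_univ j)]
      have he : ∑ j' ∈ Finset.univ.erase j,
            ∑ i, Real.exp (ustar i) * K i j' * Real.exp (v' j')
          = ∑ j' ∈ Finset.univ.erase j,
            ∑ i, Real.exp (ustar i) * K i j' * Real.exp (vstar j') := by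
        refine Finset.sum_congr rfl fun x hx => ?_
        rw [hv', Function.update_of_ne (Finset.ne_of_mem_erase hx)]
      rw [he, hv', Function.update_self, hcol L, hcol (vstar j), heL]
      ring
    have hνeq : ∑ j', v' j' * ν j'
        = (∑ j', vstar j' * ν j') - vstar j * ν j + L * ν j := by
      rw [← Finset.add_sum_erase _ _ (Finset.mem_univ j),
          ← Finset.add_sum_erase _ (fun j' => vstar j' * ν j') (Finset.mem_univ j)]
      have he : ∑ j' ∈ Finset.univ.erase j, v' j' * ν j'
          = ∑ j' ∈ Finset.univ.erase j, vstar j' * ν j' := by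
        refine Finset.sum_congr rfl fun x hx => ?_
        rw [hv', Function.update_of_ne (Finset.ne_of_mem_erase hx)]
      rw [he, hv', Function.update_self]
      ring
    rw [hsum, hνeq] at H
    have key : A * Real.exp (vstar j) - ((1 / κ) * ν j) * Real.log (Real.exp (vstar j))
        ≤ A * (ε * κ) - ((1 / κ) * ν j) * Real.log (ε * κ) := by
      rw [Real.log_exp, ← hL]
      nlinarith [H]
    have hAS : ε / κ * (∑ i, K i j) ≤ A := by
      have h1 : ε / κ * (∑ i, K i j) = ∑ i, ε / κ * K i j := by
        rw [Finset.mul_sum]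
      rw [h1, hA]
      refine Finset.sum_le_sum fun i _ => ?_
      have := mul_le_mul_of_nonneg_right (hufeas i) (le_of_lt (hKpos i j))
      linarith
    have hj' : (1 / κ) * ν j < ε ^ 2 * (∑ i, K i j) := by
      have hκ' : κ ≠ 0 := ne_of_gt hκ
      rw [div_mul_eq_mul_div, one_mul, div_lt_iff₀ hκ]
      nlinarith [hj]
    have hcb : (1 / κ) * ν j < A * (ε * κ) := by
      have h3 := mul_le_mul_of_nonneg_right hAS (le_of_lt hbpos)
      have h4 : ε / κ * (∑ i, K i j) * (ε * κ) = ε ^ 2 * (∑ i, K i j) := by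
        field_simp
      linarith
    exact screening_aux A ((1 / κ) * ν j) (ε * κ) (Real.exp (vstar j)) hbpos
      (hvfeas j) (le_of_lt (mul_pos (by positivity) (hνpos j))) hcb key
end

section
/- First-order optimality conditions for the approximate dual of Sinkhorn divergence: Let (u*, v*) be any minimizer of Ψ_κ over the feasible set F. Then for every i one has e^{u*_i}·(K e^{v*})_i ≥ κ μ_i, with equality whenever e^{u*_i} > ε/κ; and for every j one has e^{v*_j}·(Kᵀ e^{u*})_j ≥ ν_j/κ, with equality whenever e^{v*_j} > εκ. -/
open scoped Classical

private lemma exp_sub_one_le (t : ℝ) : Real.exp t - 1 ≤ t * Real.exp t := by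
  have h := Real.add_one_le_exp (-t)
  have h1 : Real.exp (-t) * Real.exp t = 1 := by
    rw [← Real.exp_add]; simp
  nlinarith [Real.exp_pos t]

private lemma key1 (a b : ℝ) (ha : 0 < a) (hb : 0 < b)
    (h : ∀ t : ℝ, 0 < t → b * t ≤ a * (Real.exp t - 1)) : b ≤ a := by
  by_contra hab
  push_neg at hab
  set t := Real.log (b / a) / 2 with htdef
  have hba : 1 < b / a := (one_lt_div ha).2 hab
  have hlog : 0 < Real.log (b / a) := Real.log_pos hba
  have ht : 0 < t := by positivity
  have hexp : Real.exp t * Real.exp t = b / a := by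
    rw [← Real.exp_add, show t + t = Real.log (b / a) by rw [htdef]; ring,
      Real.exp_log (by positivity)]
  have haet : a * Real.exp t < b := by
    have h2 : (a * Real.exp t) ^ 2 = a * b := by
      have : (a * Real.exp t) ^ 2 = a * a * (Real.exp t * Real.exp t) := by ring
      rw [this, hexp]; field_simp
    nlinarith [mul_pos ha (Real.exp_pos t)]
  have hb1 := h t ht
  nlinarith [mul_lt_mul_of_pos_left haet ht,
    mul_le_mul_of_nonneg_left (exp_sub_one_le t) ha.le]

private lemma key2 (a b tlo : ℝ) (ha : 0 < a) (hb : 0 < b) (htlo : tlo < 0)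
    (h : ∀ t : ℝ, tlo ≤ t → t < 0 → b * t ≤ a * (Real.exp t - 1)) : a ≤ b := by
  by_contra hab
  push_neg at hab
  set t := max tlo (Real.log (b / a) / 2) with htdef
  have hbapos : 0 < b / a := by positivity
  have hba : b / a < 1 := (div_lt_one ha).2 hab
  have hlog : Real.log (b / a) < 0 := Real.log_neg hbapos hba
  have ht0 : t < 0 := max_lt htlo (by linarith)
  have htlo' : tlo ≤ t := le_max_left _ _
  have hexpgt : b / a < Real.exp t := by
    have h1 : Real.log (b / a) < t :=
      lt_of_lt_of_le (by linarith) (le_max_right _ _)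
    calc b / a = Real.exp (Real.log (b / a)) := (Real.exp_log hbapos).symm
      _ < Real.exp t := Real.exp_lt_exp.2 h1
  have haet : b < a * Real.exp t := by
    have := (div_lt_iff₀ ha).1 hexpgt
    linarith [mul_comm (Real.exp t) a]
  have hb1 := h t htlo' ht0
  nlinarith [mul_lt_mul_of_neg_left haet ht0,
    mul_le_mul_of_nonneg_left (exp_sub_one_le t) ha.le]

private lemma sum_update_eq {n : ℕ} (f : Fin n → ℝ) (i : Fin n) (x : ℝ) :
    ∑ j, Function.update f i x j = (∑ j, f j) + (x - f i) := by
  rw [Finset.sum_update_of_mem (Finset.mem_univ i),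
    Finset.sum_eq_sum_sdiff_singleton_add (Finset.mem_univ i) f]
  ring

private lemma sum_apply_update {n : ℕ} (g : Fin n → ℝ → ℝ) (f : Fin n → ℝ)
    (i : Fin n) (x : ℝ) :
    ∑ j, g j (Function.update f i x j) = (∑ j, g j (f j)) + (g i x - g i (f i)) := by
  have h : (fun j => g j (Function.update f i x j))
      = Function.update (fun j => g j (f j)) i (g i x) := by
    funext j
    by_cases hji : j = i
    · subst hji; simp
    · simp [Function.update_of_ne hji]
  calc ∑ j, g j (Function.update f i x j)
      = ∑ j, Function.update (fun j => g j (f j)) i (g i x) j := by rw [h]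
    _ = (∑ j, g j (f j)) + (g i x - g i (f i)) := sum_update_eq _ _ _

theorem first_order_optimality
    (n m : ℕ) (hn : 0 < n) (hm : 0 < m)
    (C : Fin n → Fin m → ℝ) (hC : ∀ i j, 0 ≤ C i j)
    (η : ℝ) (hη : 0 < η)
    (K : Fin n → Fin m → ℝ) (hK : ∀ i j, K i j = Real.exp (-(C i j) / η))
    (μ : Fin n → ℝ) (ν : Fin m → ℝ)
    (hμpos : ∀ i, 0 < μ i) (hνpos : ∀ j, 0 < ν j)
    (hμsum : ∑ i, μ i = 1) (hνsum : ∑ j, ν j = 1)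
    (ε κ : ℝ) (hε : 0 < ε) (hκ : 0 < κ)
    (ustar : Fin n → ℝ) (vstar : Fin m → ℝ)
    (hufeas : ∀ i, ε / κ ≤ Real.exp (ustar i))
    (hvfeas : ∀ j, ε * κ ≤ Real.exp (vstar j))
    (hmin : ∀ (u : Fin n → ℝ) (v : Fin m → ℝ),
      (∀ i, ε / κ ≤ Real.exp (u i)) → (∀ j, ε * κ ≤ Real.exp (v j)) →
      (∑ i, ∑ j, Real.exp (ustar i) * K i j * Real.exp (vstar j))
          - κ * (∑ i, ustar i * μ i) - (1 / κ) * (∑ j, vstar j * ν j)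
        ≤ (∑ i, ∑ j, Real.exp (u i) * K i j * Real.exp (v j))
          - κ * (∑ i, u i * μ i) - (1 / κ) * (∑ j, v j * ν j)) :
    (∀ i, κ * μ i ≤ Real.exp (ustar i) * (∑ j, K i j * Real.exp (vstar j)) ∧
      (ε / κ < Real.exp (ustar i) →
        Real.exp (ustar i) * (∑ j, K i j * Real.exp (vstar j)) = κ * μ i)) ∧
    (∀ j, ν j / κ ≤ Real.exp (vstar j) * (∑ i, K i j * Real.exp (ustar i)) ∧
      (ε * κ < Real.exp (vstar j) →
        Real.exp (vstar j) * (∑ i, K i j * Real.exp (ustar i)) = ν j / κ)) := by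
  have hKpos : ∀ i j, 0 < K i j := fun i j => by rw [hK]; exact Real.exp_pos _
  -- rewrite the double sum row-wise
  have hdrow : ∀ (u : Fin n → ℝ) (v : Fin m → ℝ),
      (∑ i, ∑ j, Real.exp (u i) * K i j * Real.exp (v j))
        = ∑ i, Real.exp (u i) * (∑ j, K i j * Real.exp (v j)) := by
    intro u v
    refine Finset.sum_congr rfl fun i _ => ?_
    rw [Finset.mul_sum]
    exact Finset.sum_congr rfl fun j _ => by ring
  -- rewrite the double sum column-wise
  have hdcol : ∀ (u : Fin n → ℝ) (v : Fin m → ℝ),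
      (∑ i, ∑ j, Real.exp (u i) * K i j * Real.exp (v j))
        = ∑ j, Real.exp (v j) * (∑ i, K i j * Real.exp (u i)) := by
    intro u v
    rw [Finset.sum_comm]
    refine Finset.sum_congr rfl fun j _ => ?_
    rw [Finset.mul_sum]
    exact Finset.sum_congr rfl fun i _ => by ring
  constructor
  · intro i
    set A := ∑ j, K i j * Real.exp (vstar j) with hAdef
    have hA : 0 < A := Finset.sum_pos
      (fun j _ => mul_pos (hKpos i j) (Real.exp_pos _))
      ⟨⟨0, hm⟩, Finset.mem_univ _⟩
    have ha : 0 < Real.exp (ustar i) * A := mul_pos (Real.exp_pos _) hA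
    have hb : 0 < κ * μ i := mul_pos hκ (hμpos i)
    -- the key perturbation inequality
    have step : ∀ t : ℝ, ε / κ ≤ Real.exp (ustar i + t) →
        (κ * μ i) * t ≤ (Real.exp (ustar i) * A) * (Real.exp t - 1) := by
      intro t hfeas
      have hfeas' : ∀ i', ε / κ ≤ Real.exp (Function.update ustar i (ustar i + t) i') := by
        intro i'
        by_cases hii : i' = i
        · subst hii; simpa using hfeas
        · rw [Function.update_of_ne hii]; exact hufeas i'
      have h := hmin (Function.update ustar i (ustar i + t)) vstar hfeas' hvfeas
      rw [hdrow ustar vstar, hdrow _ vstar] at h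
      have h1 : ∑ i', Real.exp (Function.update ustar i (ustar i + t) i')
            * (∑ j, K i' j * Real.exp (vstar j))
          = (∑ i', Real.exp (ustar i') * (∑ j, K i' j * Real.exp (vstar j)))
            + (Real.exp (ustar i + t) * A - Real.exp (ustar i) * A) :=
        sum_apply_update (fun i' r => Real.exp r * (∑ j, K i' j * Real.exp (vstar j)))
          ustar i (ustar i + t)
      have h2 : ∑ i', Function.update ustar i (ustar i + t) i' * μ i'
          = (∑ i', ustar i' * μ i') + ((ustar i + t) * μ i - ustar i * μ i) :=
        sum_apply_update (fun i' r => r * μ i') ustar i (ustar i + t)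
      rw [h1, h2] at h
      have hea : Real.exp (ustar i + t) = Real.exp (ustar i) * Real.exp t :=
        Real.exp_add _ _
      nlinarith [h]
    have hge : κ * μ i ≤ Real.exp (ustar i) * A := by
      refine key1 _ _ ha hb fun t ht => step t ?_
      calc ε / κ ≤ Real.exp (ustar i) := hufeas i
        _ ≤ Real.exp (ustar i + t) := Real.exp_le_exp.2 (by linarith)
    refine ⟨hge, fun hint => ?_⟩
    have hεκ : 0 < ε / κ := by positivity
    have htlo : Real.log (ε / κ) - ustar i < 0 := by
      have : Real.log (ε / κ) < ustar i := by
        have := Real.log_lt_log hεκ hint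
        rwa [Real.log_exp] at this
      linarith
    have hle : Real.exp (ustar i) * A ≤ κ * μ i := by
      refine key2 _ _ _ ha hb htlo fun t ht1 _ => step t ?_
      calc ε / κ = Real.exp (Real.log (ε / κ)) := (Real.exp_log hεκ).symm
        _ ≤ Real.exp (ustar i + t) := Real.exp_le_exp.2 (by linarith)
    linarith
  · intro j
    set B := ∑ i, K i j * Real.exp (ustar i) with hBdef
    have hB : 0 < B := Finset.sum_pos
      (fun i _ => mul_pos (hKpos i j) (Real.exp_pos _))
      ⟨⟨0, hn⟩, Finset.mem_univ _⟩
    have ha : 0 < Real.exp (vstar j) * B := mul_pos (Real.exp_pos _) hB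
    have hb : 0 < (1 / κ) * ν j := mul_pos (by positivity) (hνpos j)
    have step : ∀ t : ℝ, ε * κ ≤ Real.exp (vstar j + t) →
        ((1 / κ) * ν j) * t ≤ (Real.exp (vstar j) * B) * (Real.exp t - 1) := by
      intro t hfeas
      have hfeas' : ∀ j', ε * κ ≤ Real.exp (Function.update vstar j (vstar j + t) j') := by
        intro j'
        by_cases hjj : j' = j
        · subst hjj; simpa using hfeas
        · rw [Function.update_of_ne hjj]; exact hvfeas j'
      have h := hmin ustar (Function.update vstar j (vstar j + t)) hufeas hfeas'
      rw [hdcol ustar vstar, hdcol ustar _] at h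
      have h1 : ∑ j', Real.exp (Function.update vstar j (vstar j + t) j')
            * (∑ i, K i j' * Real.exp (ustar i))
          = (∑ j', Real.exp (vstar j') * (∑ i, K i j' * Real.exp (ustar i)))
            + (Real.exp (vstar j + t) * B - Real.exp (vstar j) * B) :=
        sum_apply_update (fun j' r => Real.exp r * (∑ i, K i j' * Real.exp (ustar i)))
          vstar j (vstar j + t)
      have h2 : ∑ j', Function.update vstar j (vstar j + t) j' * ν j'
          = (∑ j', vstar j' * ν j') + ((vstar j + t) * ν j - vstar j * ν j) :=
        sum_apply_update (fun j' r => r * ν j') vstar j (vstar j + t)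
      rw [h1, h2] at h
      have hea : Real.exp (vstar j + t) = Real.exp (vstar j) * Real.exp t :=
        Real.exp_add _ _
      nlinarith [h]
    have hge : (1 / κ) * ν j ≤ Real.exp (vstar j) * B := by
      refine key1 _ _ ha hb fun t ht => step t ?_
      calc ε * κ ≤ Real.exp (vstar j) := hvfeas j
        _ ≤ Real.exp (vstar j + t) := Real.exp_le_exp.2 (by linarith)
    have hge' : ν j / κ ≤ Real.exp (vstar j) * B := by
      rw [div_eq_mul_inv, mul_comm]; simpa [one_div] using hge
    refine ⟨hge', fun hint => ?_⟩
    have hεκ : 0 < ε * κ := by positivity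
    have htlo : Real.log (ε * κ) - vstar j < 0 := by
      have : Real.log (ε * κ) < vstar j := by
        have := Real.log_lt_log hεκ hint
        rwa [Real.log_exp] at this
      linarith
    have hle : Real.exp (vstar j) * B ≤ (1 / κ) * ν j := by
      refine key2 _ _ _ ha hb htlo fun t ht1 _ => step t ?_
      calc ε * κ = Real.exp (Real.log (ε * κ)) := (Real.exp_log hεκ).symm
        _ ≤ Real.exp (vstar j + t) := Real.exp_le_exp.2 (by linarith)
    have : Real.exp (vstar j) * B = (1 / κ) * ν j := le_antisymm hle hge
    rw [this]; ring
end

section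
/- Proposition 1 (bounds on the screened dual variable u): For every i ∈ I, the screened optimal solution satisfies max( ε/κ , (min_{i'∈I} μ_{i'}) / ( ε(m − m_b) + ((max_{j∈J} ν_j)/(n ε κ K_min))·m_b ) ) ≤ e^{u^sc_i} ≤ (max_{i'∈I} μ_{i'}) / (m ε K_min). -/
open scoped Classical

lemma exp_quad {t : ℝ} (ht : |t| ≤ 1) : Real.exp t ≤ 1 + t + t ^ 2 := by
  have h := Real.exp_bound ht (n := 2) (by norm_num)
  have h2 : ∑ i ∈ Finset.range 2, t ^ i / (Nat.factorial i) = 1 + t := by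
    simp [Finset.sum_range_succ]
  rw [h2] at h
  have h3 := (abs_le.mp h).2
  norm_num at h3
  nlinarith [sq_nonneg t]

lemma stationary {A b δ : ℝ} (hA : 0 < A) (hb : 0 < b) (hδ : 0 < δ)
    (h : ∀ t : ℝ, -δ ≤ t → 0 ≤ A * (Real.exp t - 1) - b * t) : A = b := by
  by_contra hne
  rcases lt_or_gt_of_ne hne with hlt | hgt
  · set t := min 1 ((b - A) / (2 * A)) with htdef
    have ht0 : 0 < t := lt_min one_pos (by apply div_pos (by linarith) (by linarith))
    have ht1 : t ≤ 1 := min_le_left _ _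
    have ht2 : t ≤ (b - A) / (2 * A) := min_le_right _ _
    have hexp := exp_quad (t := t) (by rw [abs_of_pos ht0]; exact ht1)
    have hfeas := h t (by linarith)
    have hAt : A * t ≤ (b - A) / 2 := by
      have h4 := mul_le_mul_of_nonneg_left ht2 hA.le
      calc A * t ≤ A * ((b - A) / (2 * A)) := h4
        _ = (b - A) / 2 := by field_simp
    nlinarith [mul_le_mul_of_nonneg_left hexp hA.le,
      mul_le_mul_of_nonneg_right hAt ht0.le]
  · set s := min δ (min 1 ((A - b) / (2 * A))) with hsdef
    have hs0 : 0 < s := lt_min hδ (lt_min one_pos (by apply div_pos (by linarith) (by linarith)))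
    have hs1 : s ≤ 1 := le_trans (min_le_right _ _) (min_le_left _ _)
    have hs2 : s ≤ (A - b) / (2 * A) := le_trans (min_le_right _ _) (min_le_right _ _)
    have hsδ : s ≤ δ := min_le_left _ _
    have hexp := exp_quad (t := -s) (by rw [abs_neg, abs_of_pos hs0]; exact hs1)
    have hfeas := h (-s) (by linarith)
    have hAs : A * s ≤ (A - b) / 2 := by
      have h4 := mul_le_mul_of_nonneg_left hs2 hA.le
      calc A * s ≤ A * ((A - b) / (2 * A)) := h4
        _ = (A - b) / 2 := by field_simp
    nlinarith [mul_le_mul_of_nonneg_left hexp hA.le,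
      mul_le_mul_of_nonneg_right hAs hs0.le]

theorem bounds_on_screened_u
    (n m : ℕ) (hn : 0 < n) (hm : 0 < m)
    (C : Fin n → Fin m → ℝ) (hC : ∀ i j, 0 ≤ C i j)
    (η : ℝ) (hη : 0 < η)
    (K : Fin n → Fin m → ℝ) (hK : ∀ i j, K i j = Real.exp (-(C i j) / η))
    (μ : Fin n → ℝ) (ν : Fin m → ℝ)
    (hμpos : ∀ i, 0 < μ i) (hνpos : ∀ j, 0 < ν j)
    (hμsum : ∑ i, μ i = 1) (hνsum : ∑ j, ν j = 1)
    (ε κ : ℝ) (hε : 0 < ε) (hκ : 0 < κ)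
    (I : Finset (Fin n)) (hI : ∀ i, i ∈ I ↔ ε ^ 2 / κ * (∑ j, K i j) ≤ μ i)
    (J : Finset (Fin m)) (hJ : ∀ j, j ∈ J ↔ κ * ε ^ 2 * (∑ i, K i j) ≤ ν j)
    (hIne : I.Nonempty) (hJne : J.Nonempty)
    (Kmin : ℝ) (hKmin_le : ∀ i j, Kmin ≤ K i j) (hKmin_mem : ∃ i j, K i j = Kmin)
    (usc : Fin n → ℝ) (vsc : Fin m → ℝ)
    (husc_feas : ∀ i, ε / κ ≤ Real.exp (usc i))
    (hvsc_feas : ∀ j, ε * κ ≤ Real.exp (vsc j))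
    (husc_out : ∀ i ∉ I, usc i = Real.log (ε / κ))
    (hvsc_out : ∀ j ∉ J, vsc j = Real.log (ε * κ))
    (hsc_min : ∀ (u : Fin n → ℝ) (v : Fin m → ℝ),
      (∀ i, ε / κ ≤ Real.exp (u i)) → (∀ j, ε * κ ≤ Real.exp (v j)) →
      (∀ i ∉ I, u i = Real.log (ε / κ)) → (∀ j ∉ J, v j = Real.log (ε * κ)) →
      (∑ i, ∑ j, Real.exp (usc i) * K i j * Real.exp (vsc j))
          - κ * (∑ i, usc i * μ i) - (1 / κ) * (∑ j, vsc j * ν j)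
        ≤ (∑ i, ∑ j, Real.exp (u i) * K i j * Real.exp (v j))
          - κ * (∑ i, u i * μ i) - (1 / κ) * (∑ j, v j * ν j))
    (hactive_u : ∀ i ∈ I, ε / κ < Real.exp (usc i))
    (hactive_v : ∀ j ∈ J, ε * κ < Real.exp (vsc j))
    (μminI μmaxI νmaxJ : ℝ)
    (hμminI : (∃ i ∈ I, μ i = μminI) ∧ ∀ i ∈ I, μminI ≤ μ i)
    (hμmaxI : (∃ i ∈ I, μ i = μmaxI) ∧ ∀ i ∈ I, μ i ≤ μmaxI)
    (hνmaxJ : (∃ j ∈ J, ν j = νmaxJ) ∧ ∀ j ∈ J, ν j ≤ νmaxJ) :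
    ∀ i ∈ I,
      max (ε / κ)
          (μminI / (ε * ((m : ℝ) - J.card) + νmaxJ / ((n : ℝ) * ε * κ * Kmin) * J.card))
        ≤ Real.exp (usc i) ∧
      Real.exp (usc i) ≤ μmaxI / ((m : ℝ) * ε * Kmin) := by
  have hεκ : 0 < ε * κ := mul_pos hε hκ
  have hεdκ : 0 < ε / κ := div_pos hε hκ
  have hKpos : ∀ i j, 0 < K i j := fun i j => by rw [hK]; exact Real.exp_pos _
  have hK1 : ∀ i j, K i j ≤ 1 := fun i j => by
    rw [hK]
    have : -(C i j) / η ≤ 0 := div_nonpos_of_nonpos_of_nonneg (by linarith [hC i j]) hη.le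
    calc Real.exp (-(C i j) / η) ≤ Real.exp 0 := Real.exp_le_exp.mpr this
      _ = 1 := Real.exp_zero
  have hKminpos : 0 < Kmin := by
    obtain ⟨i, j, hij⟩ := hKmin_mem
    rw [← hij]; exact hKpos i j
  -- row/column sums with exponentials
  set S : Fin n → ℝ := fun i => ∑ j, K i j * Real.exp (vsc j) with hS
  set T : Fin m → ℝ := fun j => ∑ i, Real.exp (usc i) * K i j with hT
  have hSpos : ∀ i, 0 < S i := fun i =>
    Finset.sum_pos (fun j _ => mul_pos (hKpos i j) (Real.exp_pos _)) ⟨⟨0, hm⟩, Finset.mem_univ _⟩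
  have hTpos : ∀ j, 0 < T j := fun j =>
    Finset.sum_pos (fun i _ => mul_pos (Real.exp_pos _) (hKpos i j)) ⟨⟨0, hn⟩, Finset.mem_univ _⟩
  have hrw : ∀ (w : Fin n → ℝ),
      (∑ i, ∑ j, Real.exp (w i) * K i j * Real.exp (vsc j)) = ∑ i, Real.exp (w i) * S i := by
    intro w
    refine Finset.sum_congr rfl fun i _ => ?_
    rw [hS, Finset.mul_sum]
    exact Finset.sum_congr rfl fun j _ => by ring
  have hrw2 : ∀ (w : Fin m → ℝ),
      (∑ i, ∑ j, Real.exp (usc i) * K i j * Real.exp (w j)) = ∑ j, T j * Real.exp (w j) := by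
    intro w
    rw [Finset.sum_comm]
    refine Finset.sum_congr rfl fun j _ => ?_
    rw [hT, Finset.sum_mul]
  -- stationarity in u
  have hstatu : ∀ i0 ∈ I, Real.exp (usc i0) * S i0 = κ * μ i0 := by
    intro i0 hi0
    have hδ : 0 < usc i0 - Real.log (ε / κ) := by
      have := hactive_u i0 hi0
      have h1 : Real.log (ε / κ) < usc i0 := by
        have := Real.log_lt_log hεdκ this
        rwa [Real.log_exp] at this
      linarith
    refine stationary (mul_pos (Real.exp_pos _) (hSpos i0)) (mul_pos hκ (hμpos i0)) hδ ?_
    intro t ht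
    set u : Fin n → ℝ := Function.update usc i0 (usc i0 + t) with hu
    have hufeas : ∀ i, ε / κ ≤ Real.exp (u i) := by
      intro i
      by_cases hii : i = i0
      · subst hii
        rw [hu, Function.update_self]
        calc ε / κ = Real.exp (Real.log (ε / κ)) := (Real.exp_log hεdκ).symm
          _ ≤ Real.exp (usc i + t) := Real.exp_le_exp.mpr (by linarith)
      · rw [hu, Function.update_of_ne hii]; exact husc_feas i
    have huout : ∀ i ∉ I, u i = Real.log (ε / κ) := by
      intro i hiI
      have hii : i ≠ i0 := fun h => hiI (h ▸ hi0)
      rw [hu, Function.update_of_ne hii]; exact husc_out i hiI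
    have hmin := hsc_min u vsc hufeas hvsc_feas huout hvsc_out
    rw [hrw usc, hrw u] at hmin
    have hd1 : (∑ i, Real.exp (u i) * S i) - (∑ i, Real.exp (usc i) * S i)
        = (Real.exp (usc i0 + t) - Real.exp (usc i0)) * S i0 := by
      rw [← Finset.sum_sub_distrib]
      rw [Finset.sum_eq_single i0]
      · rw [hu, Function.update_self]; ring
      · intro i _ hii
        rw [hu, Function.update_of_ne hii]; ring
      · intro h; exact absurd (Finset.mem_univ i0) h
    have hd2 : (∑ i, u i * μ i) - (∑ i, usc i * μ i) = t * μ i0 := by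
      rw [← Finset.sum_sub_distrib]
      rw [Finset.sum_eq_single i0]
      · rw [hu, Function.update_self]; ring
      · intro i _ hii
        rw [hu, Function.update_of_ne hii]; ring
      · intro h; exact absurd (Finset.mem_univ i0) h
    have hexpadd : Real.exp (usc i0 + t) = Real.exp (usc i0) * Real.exp t := Real.exp_add _ _
    have hkey : Real.exp (usc i0) * S i0 * (Real.exp t - 1) - κ * μ i0 * t
        = ((Real.exp (usc i0 + t) - Real.exp (usc i0)) * S i0) - κ * (t * μ i0) := by
      rw [hexpadd]; ring
    rw [hkey, ← hd1, ← hd2]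
    linarith [hmin]
  -- stationarity in v
  have hstatv : ∀ j0 ∈ J, T j0 * Real.exp (vsc j0) = (1 / κ) * ν j0 := by
    intro j0 hj0
    have hδ : 0 < vsc j0 - Real.log (ε * κ) := by
      have := hactive_v j0 hj0
      have h1 : Real.log (ε * κ) < vsc j0 := by
        have := Real.log_lt_log hεκ this
        rwa [Real.log_exp] at this
      linarith
    refine stationary (mul_pos (hTpos j0) (Real.exp_pos _)) (mul_pos (by positivity) (hνpos j0)) hδ ?_
    intro t ht
    set v : Fin m → ℝ := Function.update vsc j0 (vsc j0 + t) with hv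
    have hvfeas : ∀ j, ε * κ ≤ Real.exp (v j) := by
      intro j
      by_cases hjj : j = j0
      · subst hjj
        rw [hv, Function.update_self]
        calc ε * κ = Real.exp (Real.log (ε * κ)) := (Real.exp_log hεκ).symm
          _ ≤ Real.exp (vsc j + t) := Real.exp_le_exp.mpr (by linarith)
      · rw [hv, Function.update_of_ne hjj]; exact hvsc_feas j
    have hvout : ∀ j ∉ J, v j = Real.log (ε * κ) := by
      intro j hjJ
      have hjj : j ≠ j0 := fun h => hjJ (h ▸ hj0)
      rw [hv, Function.update_of_ne hjj]; exact hvsc_out j hjJ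
    have hmin := hsc_min usc v husc_feas hvfeas husc_out hvout
    rw [hrw2 vsc, hrw2 v] at hmin
    have hd1 : (∑ j, T j * Real.exp (v j)) - (∑ j, T j * Real.exp (vsc j))
        = T j0 * (Real.exp (vsc j0 + t) - Real.exp (vsc j0)) := by
      rw [← Finset.sum_sub_distrib]
      rw [Finset.sum_eq_single j0]
      · rw [hv, Function.update_self]; ring
      · intro j _ hjj
        rw [hv, Function.update_of_ne hjj]; ring
      · intro h; exact absurd (Finset.mem_univ j0) h
    have hd2 : (∑ j, v j * ν j) - (∑ j, vsc j * ν j) = t * ν j0 := by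
      rw [← Finset.sum_sub_distrib]
      rw [Finset.sum_eq_single j0]
      · rw [hv, Function.update_self]; ring
      · intro j _ hjj
        rw [hv, Function.update_of_ne hjj]; ring
      · intro h; exact absurd (Finset.mem_univ j0) h
    have hexpadd : Real.exp (vsc j0 + t) = Real.exp (vsc j0) * Real.exp t := Real.exp_add _ _
    have hkey : T j0 * Real.exp (vsc j0) * (Real.exp t - 1) - 1 / κ * ν j0 * t
        = (T j0 * (Real.exp (vsc j0 + t) - Real.exp (vsc j0))) - 1 / κ * (t * ν j0) := by
      rw [hexpadd]; ring
    rw [hkey, ← hd1, ← hd2]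
    linarith [hmin]
  -- lower bound on T
  have hTlow : ∀ j, (n : ℝ) * (ε / κ) * Kmin ≤ T j := by
    intro j
    rw [hT]
    calc (n : ℝ) * (ε / κ) * Kmin = ∑ _i : Fin n, (ε / κ) * Kmin := by
          rw [Finset.sum_const, Finset.card_univ, Fintype.card_fin]; ring
      _ ≤ ∑ i, Real.exp (usc i) * K i j := by
          refine Finset.sum_le_sum fun i _ => ?_
          exact mul_le_mul (husc_feas i) (hKmin_le i j) hKminpos.le (Real.exp_pos _).le
  -- lower bound on S
  have hSlow : ∀ i, (m : ℝ) * ε * κ * Kmin ≤ S i := by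
    intro i
    rw [hS]
    calc (m : ℝ) * ε * κ * Kmin = ∑ _j : Fin m, Kmin * (ε * κ) := by
          rw [Finset.sum_const, Finset.card_univ, Fintype.card_fin]; ring
      _ ≤ ∑ j, K i j * Real.exp (vsc j) := by
          refine Finset.sum_le_sum fun j _ => ?_
          exact mul_le_mul (hKmin_le i j) (hvsc_feas j) hεκ.le (hKpos i j).le
  have hνmaxpos : 0 < νmaxJ := by
    obtain ⟨j, _, hj⟩ := hνmaxJ.1
    rw [← hj]; exact hνpos j
  have hmbm : (J.card : ℝ) ≤ (m : ℝ) := by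
    exact_mod_cast Finset.card_le_univ J |>.trans_eq (by simp)
  have hmbpos : (0 : ℝ) < J.card := by
    exact_mod_cast Finset.card_pos.mpr hJne
  -- bound on exp(vsc j) for j ∈ J
  have hvbound : ∀ j ∈ J, Real.exp (vsc j) ≤ νmaxJ / ((n : ℝ) * ε * Kmin) := by
    intro j hj
    have hstat := hstatv j hj
    have hTj := hTlow j
    have hden : 0 < (n : ℝ) * ε * Kmin := by positivity
    rw [le_div_iff₀ hden]
    have h1 : Real.exp (vsc j) * ((n : ℝ) * (ε / κ) * Kmin) ≤ Real.exp (vsc j) * T j :=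
      mul_le_mul_of_nonneg_left hTj (Real.exp_pos _).le
    have h2 : Real.exp (vsc j) * T j = (1 / κ) * ν j := by rw [← hstat]; ring
    have h3 : ν j ≤ νmaxJ := hνmaxJ.2 j hj
    have h4 : Real.exp (vsc j) * ((n : ℝ) * ε * Kmin) = κ * (Real.exp (vsc j) * ((n : ℝ) * (ε / κ) * Kmin)) := by
      field_simp
    rw [h4]
    calc κ * (Real.exp (vsc j) * ((n : ℝ) * (ε / κ) * Kmin)) ≤ κ * ((1 / κ) * ν j) := by
          rw [← h2]; exact mul_le_mul_of_nonneg_left h1 hκ.le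
      _ = ν j := by field_simp
      _ ≤ νmaxJ := h3
  -- upper bound on S
  have hSup : ∀ i, S i ≤ ε * κ * ((m : ℝ) - J.card) + νmaxJ / ((n : ℝ) * ε * Kmin) * J.card := by
    intro i
    show (∑ j, K i j * Real.exp (vsc j)) ≤ _
    have hsplit : ∑ j, K i j * Real.exp (vsc j)
        = ∑ j ∈ J, K i j * Real.exp (vsc j) + ∑ j ∈ Jᶜ, K i j * Real.exp (vsc j) :=
      (Finset.sum_add_sum_compl J _).symm
    rw [hsplit]
    have hb1 : ∑ j ∈ J, K i j * Real.exp (vsc j) ≤ νmaxJ / ((n : ℝ) * ε * Kmin) * J.card := by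
      calc ∑ j ∈ J, K i j * Real.exp (vsc j) ≤ ∑ j ∈ J, νmaxJ / ((n : ℝ) * ε * Kmin) := by
            refine Finset.sum_le_sum fun j hj => ?_
            calc K i j * Real.exp (vsc j) ≤ 1 * Real.exp (vsc j) :=
                  mul_le_mul_of_nonneg_right (hK1 i j) (Real.exp_pos _).le
              _ = Real.exp (vsc j) := one_mul _
              _ ≤ νmaxJ / ((n : ℝ) * ε * Kmin) := hvbound j hj
        _ = νmaxJ / ((n : ℝ) * ε * Kmin) * J.card := by
            rw [Finset.sum_const, nsmul_eq_mul]; ring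
    have hb2 : ∑ j ∈ Jᶜ, K i j * Real.exp (vsc j) ≤ ε * κ * ((m : ℝ) - J.card) := by
      have hcard : ((Jᶜ : Finset (Fin m)).card : ℝ) = (m : ℝ) - J.card := by
        rw [Finset.card_compl]
        rw [Nat.cast_sub (by simpa using Finset.card_le_univ J)]
        simp
      calc ∑ j ∈ Jᶜ, K i j * Real.exp (vsc j) ≤ ∑ _j ∈ Jᶜ, ε * κ := by
            refine Finset.sum_le_sum fun j hj => ?_
            have hjJ : j ∉ J := Finset.mem_compl.mp hj
            have : Real.exp (vsc j) = ε * κ := by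
              rw [hvsc_out j hjJ, Real.exp_log hεκ]
            rw [this]
            calc K i j * (ε * κ) ≤ 1 * (ε * κ) :=
                  mul_le_mul_of_nonneg_right (hK1 i j) hεκ.le
              _ = ε * κ := one_mul _
        _ = ε * κ * ((m : ℝ) - J.card) := by
            rw [Finset.sum_const, nsmul_eq_mul, hcard]; ring
    linarith
  -- final bounds
  intro i hi
  have hstat := hstatu i hi
  have hμmaxpos : 0 < μmaxI := by
    obtain ⟨i', _, hi'⟩ := hμmaxI.1
    rw [← hi']; exact hμpos i'
  have hμminpos : 0 < μminI := by
    obtain ⟨i', hi'I, hi'⟩ := hμminI.1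
    rw [← hi']; exact hμpos i'
  constructor
  · rw [max_le_iff]
    refine ⟨husc_feas i, ?_⟩
    set D := ε * ((m : ℝ) - J.card) + νmaxJ / ((n : ℝ) * ε * κ * Kmin) * J.card with hD
    have hDpos : 0 < D := by
      have h1 : 0 ≤ ε * ((m : ℝ) - J.card) := mul_nonneg hε.le (by linarith)
      have h2 : 0 < νmaxJ / ((n : ℝ) * ε * κ * Kmin) * J.card := by
        apply mul_pos (div_pos hνmaxpos (by positivity)) hmbpos
      rw [hD]; linarith
    rw [div_le_iff₀ hDpos]
    have hSκD : S i ≤ κ * D := by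
      have := hSup i
      have heq : κ * D = ε * κ * ((m : ℝ) - J.card) + νmaxJ / ((n : ℝ) * ε * Kmin) * J.card := by
        rw [hD]
        field_simp
      rw [heq]; exact this
    have h1 : Real.exp (usc i) * S i ≤ Real.exp (usc i) * (κ * D) :=
      mul_le_mul_of_nonneg_left hSκD (Real.exp_pos _).le
    rw [hstat] at h1
    have h2 : κ * μminI ≤ κ * μ i := mul_le_mul_of_nonneg_left (hμminI.2 i hi) hκ.le
    nlinarith [Real.exp_pos (usc i)]
  · have hden : 0 < (m : ℝ) * ε * Kmin := by positivity
    rw [le_div_iff₀ hden]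
    have h1 : Real.exp (usc i) * ((m : ℝ) * ε * κ * Kmin) ≤ Real.exp (usc i) * S i :=
      mul_le_mul_of_nonneg_left (hSlow i) (Real.exp_pos _).le
    rw [hstat] at h1
    have h2 : κ * μ i ≤ κ * μmaxI := mul_le_mul_of_nonneg_left (hμmaxI.2 i hi) hκ.le
    nlinarith [Real.exp_pos (usc i)]
end

section
/- Proposition 1 (bounds on the screened dual variable v): For every j ∈ J, the screened optimal solution satisfies max( εκ , (min_{j'∈J} ν_{j'}) / ( ε(n − n_b) + ((κ · max_{i∈I} μ_i)/(m ε K_min))·n_b ) ) ≤ e^{v^sc_j} ≤ (max_{j'∈J} ν_{j'}) / (n ε K_min). -/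
open scoped Classical

private lemma stationary_aux (A c δ : ℝ) (hδ : 0 < δ)
    (h : ∀ t : ℝ, -δ ≤ t → 0 ≤ A * (Real.exp t - 1) - c * t) : A = c := by
  have hmin : IsLocalMin (fun t : ℝ => A * Real.exp t - c * t) 0 := by
    have hmem : Set.Ioi (-δ) ∈ nhds (0:ℝ) := Ioi_mem_nhds (by linarith)
    filter_upwards [hmem] with t ht
    have h2 := h t (le_of_lt ht)
    simp only [Real.exp_zero]
    nlinarith
  have hd : HasDerivAt (fun t : ℝ => A * Real.exp t - c * t) (A - c) 0 := by
    have h1 : HasDerivAt (fun t : ℝ => Real.exp t) (Real.exp 0) 0 := Real.hasDerivAt_exp 0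
    have h2 := (h1.const_mul A).sub ((hasDerivAt_id (0:ℝ)).const_mul c)
    simpa [Pi.sub_def] using h2
  have h0 := hmin.deriv_eq_zero
  rw [hd.deriv] at h0
  linarith

theorem bounds_on_screened_v
    (n m : ℕ) (hn : 0 < n) (hm : 0 < m)
    (C : Fin n → Fin m → ℝ) (hC : ∀ i j, 0 ≤ C i j)
    (η : ℝ) (hη : 0 < η)
    (K : Fin n → Fin m → ℝ) (hK : ∀ i j, K i j = Real.exp (-(C i j) / η))
    (μ : Fin n → ℝ) (ν : Fin m → ℝ)
    (hμpos : ∀ i, 0 < μ i) (hνpos : ∀ j, 0 < ν j)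
    (hμsum : ∑ i, μ i = 1) (hνsum : ∑ j, ν j = 1)
    (ε κ : ℝ) (hε : 0 < ε) (hκ : 0 < κ)
    (I : Finset (Fin n)) (hI : ∀ i, i ∈ I ↔ ε ^ 2 / κ * (∑ j, K i j) ≤ μ i)
    (J : Finset (Fin m)) (hJ : ∀ j, j ∈ J ↔ κ * ε ^ 2 * (∑ i, K i j) ≤ ν j)
    (hIne : I.Nonempty) (hJne : J.Nonempty)
    (Kmin : ℝ) (hKmin_le : ∀ i j, Kmin ≤ K i j) (hKmin_mem : ∃ i j, K i j = Kmin)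
    (usc : Fin n → ℝ) (vsc : Fin m → ℝ)
    (husc_feas : ∀ i, ε / κ ≤ Real.exp (usc i))
    (hvsc_feas : ∀ j, ε * κ ≤ Real.exp (vsc j))
    (husc_out : ∀ i ∉ I, usc i = Real.log (ε / κ))
    (hvsc_out : ∀ j ∉ J, vsc j = Real.log (ε * κ))
    (hsc_min : ∀ (u : Fin n → ℝ) (v : Fin m → ℝ),
      (∀ i, ε / κ ≤ Real.exp (u i)) → (∀ j, ε * κ ≤ Real.exp (v j)) →
      (∀ i ∉ I, u i = Real.log (ε / κ)) → (∀ j ∉ J, v j = Real.log (ε * κ)) →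
      (∑ i, ∑ j, Real.exp (usc i) * K i j * Real.exp (vsc j))
          - κ * (∑ i, usc i * μ i) - (1 / κ) * (∑ j, vsc j * ν j)
        ≤ (∑ i, ∑ j, Real.exp (u i) * K i j * Real.exp (v j))
          - κ * (∑ i, u i * μ i) - (1 / κ) * (∑ j, v j * ν j))
    (hactive_u : ∀ i ∈ I, ε / κ < Real.exp (usc i))
    (hactive_v : ∀ j ∈ J, ε * κ < Real.exp (vsc j))
    (νminJ νmaxJ μmaxI : ℝ)
    (hνminJ : (∃ j ∈ J, ν j = νminJ) ∧ ∀ j ∈ J, νminJ ≤ ν j)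
    (hνmaxJ : (∃ j ∈ J, ν j = νmaxJ) ∧ ∀ j ∈ J, ν j ≤ νmaxJ)
    (hμmaxI : (∃ i ∈ I, μ i = μmaxI) ∧ ∀ i ∈ I, μ i ≤ μmaxI) :
    ∀ j ∈ J,
      max (ε * κ)
          (νminJ / (ε * ((n : ℝ) - I.card) + κ * μmaxI / ((m : ℝ) * ε * Kmin) * I.card))
        ≤ Real.exp (vsc j) ∧
      Real.exp (vsc j) ≤ νmaxJ / ((n : ℝ) * ε * Kmin) := by
  have hKpos : ∀ i j, 0 < K i j := fun i j => by rw [hK]; exact Real.exp_pos _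
  have hKle1 : ∀ i j, K i j ≤ 1 := fun i j => by
    rw [hK]
    exact Real.exp_le_one_iff.mpr (div_nonpos_of_nonpos_of_nonneg (neg_nonpos.mpr (hC i j)) hη.le)
  have hKminpos : 0 < Kmin := by
    obtain ⟨i, j, hij⟩ := hKmin_mem
    rw [← hij]; exact hKpos i j
  have hεκ : 0 < ε * κ := mul_pos hε hκ
  have hεκ' : 0 < ε / κ := div_pos hε hκ
  -- Stationarity in v on J
  have hstat_v : ∀ j ∈ J, (∑ i, Real.exp (usc i) * K i j) * Real.exp (vsc j) = ν j / κ := by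
    intro j hj
    set E := Real.exp (vsc j) with hE
    have hElt : ε * κ < E := hactive_v j hj
    have hEpos : 0 < E := Real.exp_pos _
    set δ := Real.log (E / (ε * κ)) with hδdef
    have hδ : 0 < δ := Real.log_pos (by rw [lt_div_iff₀ hεκ]; linarith)
    apply stationary_aux _ _ δ hδ
    intro t ht
    set v' := Function.update vsc j (vsc j + t) with hv'
    have hfeas' : ∀ j', ε * κ ≤ Real.exp (v' j') := by
      intro j'
      by_cases hjj : j' = j
      · rw [hv', hjj, Function.update_self, Real.exp_add]
        have h1 : Real.exp (-δ) ≤ Real.exp t := Real.exp_le_exp.mpr ht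
        have h2 : Real.exp (-δ) = ε * κ / E := by
          rw [Real.exp_neg, hδdef, Real.exp_log (div_pos hEpos hεκ)]
          rw [inv_div]
        show ε * κ ≤ E * Real.exp t
        calc ε * κ = E * (ε * κ / E) := by
              rw [mul_div_assoc']
              rw [mul_div_cancel_left₀ _ (ne_of_gt hEpos)]
          _ ≤ E * Real.exp t := by
              apply mul_le_mul_of_nonneg_left _ hEpos.le
              rw [← h2]; exact h1
      · rw [hv', Function.update_of_ne hjj]; exact hvsc_feas j'
    have hout' : ∀ j' ∉ J, v' j' = Real.log (ε * κ) := by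
      intro j' hj'
      have hjj : j' ≠ j := fun h => hj' (h ▸ hj)
      rw [hv', Function.update_of_ne hjj]; exact hvsc_out j' hj'
    have hmin := hsc_min usc v' husc_feas hfeas' husc_out hout'
    have hSum : (∑ i, ∑ j', Real.exp (usc i) * K i j' * Real.exp (v' j'))
        = (∑ i, ∑ j', Real.exp (usc i) * K i j' * Real.exp (vsc j'))
          + (∑ i, Real.exp (usc i) * K i j) * E * (Real.exp t - 1) := by
      have hrow : ∀ i, (∑ j', Real.exp (usc i) * K i j' * Real.exp (v' j'))
          = (∑ j', Real.exp (usc i) * K i j' * Real.exp (vsc j'))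
            + Real.exp (usc i) * K i j * (E * (Real.exp t - 1)) := by
        intro i
        have hdiff : ∑ j', (Real.exp (usc i) * K i j' * Real.exp (v' j')
            - Real.exp (usc i) * K i j' * Real.exp (vsc j'))
            = Real.exp (usc i) * K i j * (E * (Real.exp t - 1)) := by
          rw [Finset.sum_eq_single_of_mem j (Finset.mem_univ j)]
          · rw [hv', Function.update_self, Real.exp_add]; ring
          · intro j' _ hne; rw [hv', Function.update_of_ne hne]; ring
        rw [Finset.sum_sub_distrib] at hdiff
        linarith
      rw [Finset.sum_congr rfl (fun i _ => hrow i), Finset.sum_add_distrib,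
        ← Finset.sum_mul, mul_assoc]
    have hV : (∑ j', v' j' * ν j') = (∑ j', vsc j' * ν j') + t * ν j := by
      have hdiff : ∑ j', (v' j' * ν j' - vsc j' * ν j') = t * ν j := by
        rw [Finset.sum_eq_single_of_mem j (Finset.mem_univ j)]
        · rw [hv', Function.update_self]; ring
        · intro j' _ hne; rw [hv', Function.update_of_ne hne]; ring
      rw [Finset.sum_sub_distrib] at hdiff
      linarith
    rw [hSum, hV] at hmin
    have hκne : κ ≠ 0 := ne_of_gt hκ
    have hstep : 0 ≤ (∑ i, Real.exp (usc i) * K i j) * E * (Real.exp t - 1)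
        - (1 / κ) * (t * ν j) := by linarith
    have heq : (1 / κ) * (t * ν j) = ν j / κ * t := by ring
    linarith
  -- Stationarity in u on I
  have hstat_u : ∀ i ∈ I, Real.exp (usc i) * (∑ j, K i j * Real.exp (vsc j)) = κ * μ i := by
    intro i hi
    set E := Real.exp (usc i) with hE
    have hElt : ε / κ < E := hactive_u i hi
    have hEpos : 0 < E := Real.exp_pos _
    set δ := Real.log (E / (ε / κ)) with hδdef
    have hδ : 0 < δ := Real.log_pos (by rw [lt_div_iff₀ hεκ']; linarith)
    apply stationary_aux _ _ δ hδ
    intro t ht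
    set u' := Function.update usc i (usc i + t) with hu'
    have hfeas' : ∀ i', ε / κ ≤ Real.exp (u' i') := by
      intro i'
      by_cases hii : i' = i
      · rw [hu', hii, Function.update_self, Real.exp_add]
        have h1 : Real.exp (-δ) ≤ Real.exp t := Real.exp_le_exp.mpr ht
        have h2 : Real.exp (-δ) = ε / κ / E := by
          rw [Real.exp_neg, hδdef, Real.exp_log (div_pos hEpos hεκ')]
          rw [inv_div]
        show ε / κ ≤ E * Real.exp t
        calc ε / κ = E * (ε / κ / E) := by
              rw [mul_div_assoc']
              rw [mul_div_cancel_left₀ _ (ne_of_gt hEpos)]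
          _ ≤ E * Real.exp t := by
              apply mul_le_mul_of_nonneg_left _ hEpos.le
              rw [← h2]; exact h1
      · rw [hu', Function.update_of_ne hii]; exact husc_feas i'
    have hout' : ∀ i' ∉ I, u' i' = Real.log (ε / κ) := by
      intro i' hi'
      have hii : i' ≠ i := fun h => hi' (h ▸ hi)
      rw [hu', Function.update_of_ne hii]; exact husc_out i' hi'
    have hmin := hsc_min u' vsc hfeas' hvsc_feas hout' hvsc_out
    have hSum : (∑ i', ∑ j, Real.exp (u' i') * K i' j * Real.exp (vsc j))
        = (∑ i', ∑ j, Real.exp (usc i') * K i' j * Real.exp (vsc j))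
          + E * (∑ j, K i j * Real.exp (vsc j)) * (Real.exp t - 1) := by
      have hdiff : ∑ i', ((∑ j, Real.exp (u' i') * K i' j * Real.exp (vsc j))
          - (∑ j, Real.exp (usc i') * K i' j * Real.exp (vsc j)))
          = E * (∑ j, K i j * Real.exp (vsc j)) * (Real.exp t - 1) := by
        rw [Finset.sum_eq_single_of_mem i (Finset.mem_univ i)]
        · rw [hu', Function.update_self, Real.exp_add, ← Finset.sum_sub_distrib,
            Finset.mul_sum, Finset.sum_mul]
          apply Finset.sum_congr rfl
          intro j _; ring
        · intro i' _ hne; rw [hu', Function.update_of_ne hne, sub_self]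
      rw [Finset.sum_sub_distrib] at hdiff
      linarith
    have hU : (∑ i', u' i' * μ i') = (∑ i', usc i' * μ i') + t * μ i := by
      have hdiff : ∑ i', (u' i' * μ i' - usc i' * μ i') = t * μ i := by
        rw [Finset.sum_eq_single_of_mem i (Finset.mem_univ i)]
        · rw [hu', Function.update_self]; ring
        · intro i' _ hne; rw [hu', Function.update_of_ne hne]; ring
      rw [Finset.sum_sub_distrib] at hdiff
      linarith
    rw [hSum, hU] at hmin
    nlinarith [hmin]
  intro j hj
  set E := Real.exp (vsc j) with hE
  have hEpos : 0 < E := Real.exp_pos _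
  have hA := hstat_v j hj
  have hnεK : 0 < (n : ℝ) * ε * Kmin := by positivity
  constructor
  · -- lower bounds
    apply max_le
    · exact hvsc_feas j
    · -- νminJ / D ≤ E
      set D := ε * ((n : ℝ) - I.card) + κ * μmaxI / ((m : ℝ) * ε * Kmin) * I.card with hD
      have hcardn : I.card ≤ n := by simpa using Finset.card_le_univ I
      have hcard : (I.card : ℝ) ≤ n := by exact_mod_cast hcardn
      have hμmaxIpos : 0 < μmaxI := by
        obtain ⟨⟨i, hi, hieq⟩, _⟩ := hμmaxI
        rw [← hieq]; exact hμpos i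
      have hDpos : 0 < D := by
        have h1 : 0 ≤ ε * ((n : ℝ) - I.card) := by
          apply mul_nonneg hε.le; linarith
        have h2 : 0 < κ * μmaxI / ((m : ℝ) * ε * Kmin) * I.card := by
          have hc : (0:ℝ) < I.card := by
            exact_mod_cast Finset.card_pos.mpr hIne
          positivity
        rw [hD]
        linarith
      -- bound on each e^{usc i} for i ∈ I
      have hbI : ∀ i ∈ I, κ * (Real.exp (usc i) * K i j)
          ≤ κ * μmaxI / ((m : ℝ) * ε * Kmin) := by
        intro i hi
        have hB := hstat_u i hi
        have hinner : (m : ℝ) * (Kmin * (ε * κ)) ≤ ∑ j', K i j' * Real.exp (vsc j') := by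
          calc (m : ℝ) * (Kmin * (ε * κ)) = ∑ _j' : Fin m, Kmin * (ε * κ) := by
                rw [Finset.sum_const, Finset.card_univ, Fintype.card_fin, nsmul_eq_mul]
            _ ≤ ∑ j', K i j' * Real.exp (vsc j') := by
                apply Finset.sum_le_sum
                intro j' _
                exact mul_le_mul (hKmin_le i j') (hvsc_feas j') hεκ.le (hKpos i j').le
        have hEu : Real.exp (usc i) ≤ μmaxI / ((m : ℝ) * ε * Kmin) := by
          have hEupos : 0 < Real.exp (usc i) := Real.exp_pos _
          have h1 : Real.exp (usc i) * ((m : ℝ) * (Kmin * (ε * κ))) ≤ κ * μ i := by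
            calc Real.exp (usc i) * ((m : ℝ) * (Kmin * (ε * κ)))
                ≤ Real.exp (usc i) * (∑ j', K i j' * Real.exp (vsc j')) :=
              mul_le_mul_of_nonneg_left hinner hEupos.le
              _ = κ * μ i := hB
          have h2 : μ i ≤ μmaxI := hμmaxI.2 i hi
          rw [le_div_iff₀ (by positivity)]
          have hκne : κ ≠ 0 := ne_of_gt hκ
          nlinarith
        calc κ * (Real.exp (usc i) * K i j) ≤ κ * (Real.exp (usc i) * 1) := by
              apply mul_le_mul_of_nonneg_left _ hκ.le
              exact mul_le_mul_of_nonneg_left (hKle1 i j) (Real.exp_pos _).le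
          _ = κ * Real.exp (usc i) := by ring
          _ ≤ κ * (μmaxI / ((m : ℝ) * ε * Kmin)) := mul_le_mul_of_nonneg_left hEu hκ.le
          _ = κ * μmaxI / ((m : ℝ) * ε * Kmin) := by ring
      have hbIc : ∀ i ∈ Iᶜ, κ * (Real.exp (usc i) * K i j) ≤ ε := by
        intro i hi
        rw [Finset.mem_compl] at hi
        have : Real.exp (usc i) = ε / κ := by
          rw [husc_out i hi, Real.exp_log hεκ']
        rw [this]
        calc κ * (ε / κ * K i j) ≤ κ * (ε / κ * 1) := by
              apply mul_le_mul_of_nonneg_left _ hκ.le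
              exact mul_le_mul_of_nonneg_left (hKle1 i j) hεκ'.le
          _ = ε := by field_simp
      have hsplit : κ * (∑ i, Real.exp (usc i) * K i j) ≤ D := by
        rw [Finset.mul_sum, ← Finset.sum_add_sum_compl I]
        have h1 : ∑ i ∈ I, κ * (Real.exp (usc i) * K i j)
            ≤ I.card * (κ * μmaxI / ((m : ℝ) * ε * Kmin)) := by
          calc ∑ i ∈ I, κ * (Real.exp (usc i) * K i j)
              ≤ ∑ _i ∈ I, κ * μmaxI / ((m : ℝ) * ε * Kmin) := Finset.sum_le_sum hbI
            _ = I.card * (κ * μmaxI / ((m : ℝ) * ε * Kmin)) := by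
                rw [Finset.sum_const, nsmul_eq_mul]
        have h2 : ∑ i ∈ Iᶜ, κ * (Real.exp (usc i) * K i j) ≤ ((n : ℝ) - I.card) * ε := by
          calc ∑ i ∈ Iᶜ, κ * (Real.exp (usc i) * K i j) ≤ ∑ _i ∈ Iᶜ, ε :=
                Finset.sum_le_sum hbIc
            _ = (Iᶜ.card : ℝ) * ε := by rw [Finset.sum_const, nsmul_eq_mul]
            _ = ((n : ℝ) - I.card) * ε := by
                rw [Finset.card_compl, Fintype.card_fin, Nat.cast_sub hcardn]
        rw [hD]
        calc (∑ i ∈ I, κ * (Real.exp (usc i) * K i j))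
              + ∑ i ∈ Iᶜ, κ * (Real.exp (usc i) * K i j)
            ≤ I.card * (κ * μmaxI / ((m : ℝ) * ε * Kmin)) + ((n : ℝ) - I.card) * ε := by
              linarith
          _ = ε * ((n : ℝ) - I.card) + κ * μmaxI / ((m : ℝ) * ε * Kmin) * I.card := by ring
      have hνj : ν j ≤ E * D := by
        have : κ * (∑ i, Real.exp (usc i) * K i j) * E ≤ D * E := by
          apply mul_le_mul_of_nonneg_right hsplit hEpos.le
        have hAA : κ * ((∑ i, Real.exp (usc i) * K i j) * E) = ν j := by
          rw [hA]; field_simp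
        nlinarith
      rw [div_le_iff₀ hDpos]
      calc νminJ ≤ ν j := hνminJ.2 j hj
        _ ≤ E * D := hνj
  · -- upper bound
    have hlb : (n : ℝ) * (ε / κ * Kmin) * E ≤ ν j / κ := by
      rw [← hA]
      apply mul_le_mul_of_nonneg_right _ hEpos.le
      calc (n : ℝ) * (ε / κ * Kmin) = ∑ _i : Fin n, ε / κ * Kmin := by
            rw [Finset.sum_const, Finset.card_univ, Fintype.card_fin, nsmul_eq_mul]
        _ ≤ ∑ i, Real.exp (usc i) * K i j := by
            apply Finset.sum_le_sum
            intro i _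
            exact mul_le_mul (husc_feas i) (hKmin_le i j) hKminpos.le (Real.exp_pos _).le
    have hνj : (n : ℝ) * ε * Kmin * E ≤ ν j := by
      have hκne : κ ≠ 0 := ne_of_gt hκ
      have hmul := mul_le_mul_of_nonneg_left hlb hκ.le
      have hh : κ * ((n : ℝ) * (ε / κ * Kmin) * E) = (n : ℝ) * ε * Kmin * E := by
        have hcan : ε / κ * κ = ε := div_mul_cancel₀ ε hκne
        linear_combination ((n : ℝ) * Kmin * E) * hcan
      have hh2 : κ * (ν j / κ) = ν j := by field_simp
      linarith
    rw [le_div_iff₀ hnεK]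
    calc E * ((n : ℝ) * ε * Kmin) = (n : ℝ) * ε * Kmin * E := by ring
      _ ≤ ν j := hνj
      _ ≤ νmaxJ := hνmaxJ.2 j hj
end

section
/- Explicit bound on the divergence between μ and the screened marginal (proof of Proposition 2): d_ρ(μ, μ^sc) ≤ n_b·c_κ·(max_i μ_i) + (n − n_b)·[ m_b·(max_j ν_j)/(n κ K_min) + (m − m_b)·ε² − (min_i μ_i) + (max_i μ_i)·log( κ(n − n_b + 1)(max_i μ_i)/(m_b K_min · min_{j∈J} ν_j) + n_b κ² (max_i μ_i)² / (m m_b ε² K_min² · min_{j∈J} ν_j) ) ], where c_κ = κ − log κ − 1, provided the argument of the logarithm is at least 1. -/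
open scoped Classical
set_option maxHeartbeats 1000000

lemma aux_exp_quad {x : ℝ} (hx : |x| ≤ 1) : Real.exp x ≤ 1 + x + x ^ 2 := by
  have h := Real.exp_bound hx (by norm_num : 0 < 2)
  simp [Finset.sum_range_succ] at h
  have := abs_le.1 h
  nlinarith [sq_abs x, abs_nonneg x]

lemma aux_eq_of_perturb (a b s0 : ℝ) (ha : 0 < a) (hs0 : 0 < s0)
    (h1 : ∀ s : ℝ, 0 < s → s ≤ s0 → s * b ≤ a * (Real.exp s - 1))
    (h2 : ∀ s : ℝ, 0 < s → s ≤ s0 → (-s) * b ≤ a * (Real.exp (-s) - 1)) :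
    a = b := by
  have key1 : ∀ s : ℝ, 0 < s → s ≤ min s0 1 → b ≤ a * (1 + s) := by
    intro s hs hs'
    have hb := h1 s hs (hs'.trans (min_le_left _ _))
    have he : Real.exp s ≤ 1 + s + s ^ 2 :=
      aux_exp_quad (by rw [abs_of_pos hs]; exact hs'.trans (min_le_right _ _))
    have h3 : s * b ≤ a * (s + s ^ 2) := hb.trans (by nlinarith)
    nlinarith
  have key2 : ∀ s : ℝ, 0 < s → s ≤ min s0 1 → a * (1 - s) ≤ b := by
    intro s hs hs'
    have hb := h2 s hs (hs'.trans (min_le_left _ _))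
    have he : Real.exp (-s) ≤ 1 + (-s) + s ^ 2 := by
      have := aux_exp_quad (x := -s) (by rw [abs_neg, abs_of_pos hs]; exact hs'.trans (min_le_right _ _))
      nlinarith
    have h3 : (-s) * b ≤ a * (-s + s ^ 2) := hb.trans (by nlinarith)
    nlinarith
  have hba : b ≤ a := by
    by_contra hc
    push_neg at hc
    set s := min (min s0 1) ((b - a) / (2 * a)) with hsdef
    have hspos : 0 < s := lt_min (lt_min hs0 one_pos) (div_pos (by linarith) (by linarith))
    have h4 := key1 s hspos (min_le_left _ _)
    have h5 : s ≤ (b - a) / (2 * a) := min_le_right _ _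
    have h6 : s * (2 * a) ≤ b - a := by
      rw [le_div_iff₀ (by linarith : (0:ℝ) < 2 * a)] at h5; exact h5
    nlinarith
  have hab : a ≤ b := by
    by_contra hc
    push_neg at hc
    set s := min (min s0 1) ((a - b) / (2 * a)) with hsdef
    have hspos : 0 < s := lt_min (lt_min hs0 one_pos) (div_pos (by linarith) (by linarith))
    have h4 := key2 s hspos (min_le_left _ _)
    have h5 : s ≤ (a - b) / (2 * a) := min_le_right _ _
    have h6 : s * (2 * a) ≤ a - b := by
      rw [le_div_iff₀ (by linarith : (0:ℝ) < 2 * a)] at h5; exact h5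
    nlinarith
  linarith

lemma aux_sum_update_sub {N : ℕ} (f : Fin N → ℝ) (i0 : Fin N) (c : ℝ) (g : Fin N → ℝ → ℝ) :
    (∑ i, g i (Function.update f i0 c i)) - (∑ i, g i (f i))
      = g i0 c - g i0 (f i0) := by
  rw [← Finset.sum_sub_distrib]
  rw [Finset.sum_eq_single i0]
  · simp
  · intro i _ hi; simp [Function.update_of_ne hi]
  · simp

theorem divergence_bound_mu
    (n m : ℕ) (hn : 0 < n) (hm : 0 < m)
    (C : Fin n → Fin m → ℝ) (hC : ∀ i j, 0 ≤ C i j)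
    (η : ℝ) (hη : 0 < η)
    (K : Fin n → Fin m → ℝ) (hK : ∀ i j, K i j = Real.exp (-(C i j) / η))
    (μ : Fin n → ℝ) (ν : Fin m → ℝ)
    (hμpos : ∀ i, 0 < μ i) (hνpos : ∀ j, 0 < ν j)
    (hμsum : ∑ i, μ i = 1) (hνsum : ∑ j, ν j = 1)
    (ε κ : ℝ) (hε : 0 < ε) (hκ : 0 < κ)
    (I : Finset (Fin n)) (hI : ∀ i, i ∈ I ↔ ε ^ 2 / κ * (∑ j, K i j) ≤ μ i)
    (J : Finset (Fin m)) (hJ : ∀ j, j ∈ J ↔ κ * ε ^ 2 * (∑ i, K i j) ≤ ν j)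
    (hIne : I.Nonempty) (hJne : J.Nonempty)
    (Kmin : ℝ) (hKmin_le : ∀ i j, Kmin ≤ K i j) (hKmin_mem : ∃ i j, K i j = Kmin)
    (usc : Fin n → ℝ) (vsc : Fin m → ℝ)
    (husc_feas : ∀ i, ε / κ ≤ Real.exp (usc i))
    (hvsc_feas : ∀ j, ε * κ ≤ Real.exp (vsc j))
    (husc_out : ∀ i ∉ I, usc i = Real.log (ε / κ))
    (hvsc_out : ∀ j ∉ J, vsc j = Real.log (ε * κ))
    (hsc_min : ∀ (u : Fin n → ℝ) (v : Fin m → ℝ),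
      (∀ i, ε / κ ≤ Real.exp (u i)) → (∀ j, ε * κ ≤ Real.exp (v j)) →
      (∀ i ∉ I, u i = Real.log (ε / κ)) → (∀ j ∉ J, v j = Real.log (ε * κ)) →
      (∑ i, ∑ j, Real.exp (usc i) * K i j * Real.exp (vsc j))
          - κ * (∑ i, usc i * μ i) - (1 / κ) * (∑ j, vsc j * ν j)
        ≤ (∑ i, ∑ j, Real.exp (u i) * K i j * Real.exp (v j))
          - κ * (∑ i, u i * μ i) - (1 / κ) * (∑ j, v j * ν j))
    (hactive_u : ∀ i ∈ I, ε / κ < Real.exp (usc i))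
    (hactive_v : ∀ j ∈ J, ε * κ < Real.exp (vsc j))
    (μsc : Fin n → ℝ)
    (hμsc : ∀ i, μsc i = ∑ j, Real.exp (usc i) * K i j * Real.exp (vsc j))
    (μmax μmin νmax νminJ : ℝ)
    (hμmax : (∃ i, μ i = μmax) ∧ ∀ i, μ i ≤ μmax)
    (hμmin : (∃ i, μ i = μmin) ∧ ∀ i, μmin ≤ μ i)
    (hνmax : (∃ j, ν j = νmax) ∧ ∀ j, ν j ≤ νmax)
    (hνminJ : (∃ j ∈ J, ν j = νminJ) ∧ ∀ j ∈ J, νminJ ≤ ν j)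
    (hlogarg : 1 ≤ (κ * ((n : ℝ) - I.card + 1) * μmax / ((J.card : ℝ) * Kmin * νminJ)
              + (I.card : ℝ) * κ ^ 2 * μmax ^ 2
                / ((m : ℝ) * J.card * ε ^ 2 * Kmin ^ 2 * νminJ)))
    :
    ∑ i, (μsc i - μ i + μ i * Real.log (μ i / μsc i)) ≤
      (I.card : ℝ) * (κ - Real.log κ - 1) * μmax
        + ((n : ℝ) - I.card) *
          ((J.card : ℝ) * νmax / ((n : ℝ) * κ * Kmin)
            + ((m : ℝ) - J.card) * ε ^ 2 - μmin
            + μmax * Real.log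
                (κ * ((n : ℝ) - I.card + 1) * μmax / ((J.card : ℝ) * Kmin * νminJ)
              + (I.card : ℝ) * κ ^ 2 * μmax ^ 2
                / ((m : ℝ) * J.card * ε ^ 2 * Kmin ^ 2 * νminJ))) := by
  classical
  have hnR : (0:ℝ) < n := Nat.cast_pos.mpr hn
  have hmR : (0:ℝ) < m := Nat.cast_pos.mpr hm
  have hεκ : 0 < ε / κ := div_pos hε hκ
  have hεκ' : 0 < ε * κ := mul_pos hε hκ
  have hKpos : ∀ i j, 0 < K i j := fun i j => by rw [hK]; exact Real.exp_pos _
  have hKle1 : ∀ i j, K i j ≤ 1 := fun i j => by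
    rw [hK, ← Real.exp_zero]
    apply Real.exp_le_exp.mpr
    have h2 : 0 ≤ C i j / η := div_nonneg (hC i j) hη.le
    rw [neg_div]; linarith
  have hKminpos : 0 < Kmin := by
    obtain ⟨i, j, h⟩ := hKmin_mem; rw [← h]; exact hKpos i j
  have hKmin1 : Kmin ≤ 1 := by
    obtain ⟨i, j, h⟩ := hKmin_mem; rw [← h]; exact hKle1 i j
  have hμmaxpos : 0 < μmax := by obtain ⟨i, h⟩ := hμmax.1; rw [← h]; exact hμpos i
  have hνminJpos : 0 < νminJ := by obtain ⟨j, _, h⟩ := hνminJ.1; rw [← h]; exact hνpos j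
  have hνmaxpos : 0 < νmax := by obtain ⟨j, h⟩ := hνmax.1; rw [← h]; exact hνpos j
  have hmbpos : (0:ℝ) < J.card := Nat.cast_pos.mpr (Finset.card_pos.mpr hJne)
  have hμscpos : ∀ i, 0 < μsc i := by
    intro i
    rw [hμsc]
    apply Finset.sum_pos
    · intro j _
      have := hKpos i j
      positivity
    · exact ⟨⟨0, hm⟩, Finset.mem_univ _⟩
  -- optimality in u
  have hopt_u : ∀ i0 ∈ I, μsc i0 = κ * μ i0 := by
    intro i0 hi0
    have husc_lb : Real.log (ε / κ) ≤ usc i0 := (Real.log_le_iff_le_exp hεκ).2 (husc_feas i0)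
    have hs0 : 0 < usc i0 - Real.log (ε / κ) := by
      have h1 : Real.log (ε / κ) < Real.log (Real.exp (usc i0)) :=
        Real.log_lt_log hεκ (hactive_u i0 hi0)
      rw [Real.log_exp] at h1; linarith
    have hgen : ∀ t : ℝ, Real.log (ε / κ) ≤ usc i0 + t →
        t * (κ * μ i0) ≤ μsc i0 * (Real.exp t - 1) := by
      intro t ht
      set u' : Fin n → ℝ := Function.update usc i0 (usc i0 + t) with hu'
      have hfeas : ∀ i, ε / κ ≤ Real.exp (u' i) := by
        intro i
        by_cases h : i = i0
        · subst h; rw [hu', Function.update_self]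
          exact (Real.log_le_iff_le_exp hεκ).1 ht
        · rw [hu', Function.update_of_ne h]; exact husc_feas i
      have hout : ∀ i ∉ I, u' i = Real.log (ε / κ) := by
        intro i hi
        have hne : i ≠ i0 := fun h => hi (h ▸ hi0)
        rw [hu', Function.update_of_ne hne]; exact husc_out i hi
      have hmin := hsc_min u' vsc hfeas hvsc_feas hout hvsc_out
      have hd1 : (∑ i, ∑ j, Real.exp (u' i) * K i j * Real.exp (vsc j))
          - (∑ i, ∑ j, Real.exp (usc i) * K i j * Real.exp (vsc j))
          = (Real.exp t - 1) * μsc i0 := by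
        have h := aux_sum_update_sub usc i0 (usc i0 + t)
          (fun i x => ∑ j, Real.exp x * K i j * Real.exp (vsc j))
        rw [hu', h, hμsc, Finset.mul_sum, ← Finset.sum_sub_distrib]
        refine Finset.sum_congr rfl fun j _ => ?_
        rw [Real.exp_add]; ring
      have hd2 : (∑ i, u' i * μ i) - (∑ i, usc i * μ i) = t * μ i0 := by
        have h := aux_sum_update_sub usc i0 (usc i0 + t) (fun i x => x * μ i)
        rw [hu', h]; ring
      have hd2' : κ * ((∑ i, u' i * μ i) - (∑ i, usc i * μ i)) = κ * (t * μ i0) := by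
        rw [hd2]
      nlinarith [hmin, hd1, hd2']
    refine aux_eq_of_perturb (μsc i0) (κ * μ i0) (usc i0 - Real.log (ε / κ))
      (hμscpos i0) hs0 (fun s hs _ => ?_) (fun s hs hsle => ?_)
    · exact hgen s (by linarith)
    · have := hgen (-s) (by rw [← sub_eq_add_neg]; linarith)
      convert this using 2
  -- optimality in v
  have hopt_v : ∀ j0 ∈ J, (∑ i, Real.exp (usc i) * K i j0) * Real.exp (vsc j0) = ν j0 / κ := by
    intro j0 hj0
    have hapos : 0 < (∑ i, Real.exp (usc i) * K i j0) * Real.exp (vsc j0) := by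
      apply mul_pos _ (Real.exp_pos _)
      apply Finset.sum_pos
      · intro i _; exact mul_pos (Real.exp_pos _) (hKpos i j0)
      · exact ⟨⟨0, hn⟩, Finset.mem_univ _⟩
    have hvsc_lb : Real.log (ε * κ) ≤ vsc j0 := (Real.log_le_iff_le_exp hεκ').2 (hvsc_feas j0)
    have hs0 : 0 < vsc j0 - Real.log (ε * κ) := by
      have h1 : Real.log (ε * κ) < Real.log (Real.exp (vsc j0)) :=
        Real.log_lt_log hεκ' (hactive_v j0 hj0)
      rw [Real.log_exp] at h1; linarith
    have hgen : ∀ t : ℝ, Real.log (ε * κ) ≤ vsc j0 + t →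
        t * (ν j0 / κ) ≤ ((∑ i, Real.exp (usc i) * K i j0) * Real.exp (vsc j0)) * (Real.exp t - 1) := by
      intro t ht
      set v' : Fin m → ℝ := Function.update vsc j0 (vsc j0 + t) with hv'
      have hfeas : ∀ j, ε * κ ≤ Real.exp (v' j) := by
        intro j
        by_cases h : j = j0
        · subst h; rw [hv', Function.update_self]
          exact (Real.log_le_iff_le_exp hεκ').1 ht
        · rw [hv', Function.update_of_ne h]; exact hvsc_feas j
      have hout : ∀ j ∉ J, v' j = Real.log (ε * κ) := by
        intro j hj
        have hne : j ≠ j0 := fun h => hj (h ▸ hj0)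
        rw [hv', Function.update_of_ne hne]; exact hvsc_out j hj
      have hmin := hsc_min usc v' husc_feas hfeas husc_out hout
      have hd1 : (∑ i, ∑ j, Real.exp (usc i) * K i j * Real.exp (v' j))
          - (∑ i, ∑ j, Real.exp (usc i) * K i j * Real.exp (vsc j))
          = (Real.exp t - 1) * ((∑ i, Real.exp (usc i) * K i j0) * Real.exp (vsc j0)) := by
        rw [Finset.sum_comm (f := fun i j => Real.exp (usc i) * K i j * Real.exp (v' j)),
            Finset.sum_comm (f := fun i j => Real.exp (usc i) * K i j * Real.exp (vsc j))]
        have h := aux_sum_update_sub vsc j0 (vsc j0 + t)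
          (fun j x => ∑ i, Real.exp (usc i) * K i j * Real.exp x)
        rw [hv', h, Finset.sum_mul, Finset.mul_sum, ← Finset.sum_sub_distrib]
        refine Finset.sum_congr rfl fun i _ => ?_
        rw [Real.exp_add]; ring
      have hd2 : (∑ j, v' j * ν j) - (∑ j, vsc j * ν j) = t * ν j0 := by
        have h := aux_sum_update_sub vsc j0 (vsc j0 + t) (fun j x => x * ν j)
        rw [hv', h]; ring
      have hd2' : (1/κ) * ((∑ j, v' j * ν j) - (∑ j, vsc j * ν j)) = t * (ν j0 / κ) := by
        rw [hd2]; ring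
      nlinarith [hmin, hd1, hd2']
    refine aux_eq_of_perturb _ (ν j0 / κ) (vsc j0 - Real.log (ε * κ))
      hapos hs0 (fun s hs _ => ?_) (fun s hs hsle => ?_)
    · exact hgen s (by linarith)
    · have := hgen (-s) (by rw [← sub_eq_add_neg]; linarith)
      convert this using 2
  -- cards
  have hcardI : ((Iᶜ).card : ℝ) = (n:ℝ) - I.card := by
    have h := Finset.card_compl I
    rw [Fintype.card_fin] at h
    rw [h, Nat.cast_sub (by simpa using Finset.card_le_univ I)]
  have hcardJ : ((Jᶜ).card : ℝ) = (m:ℝ) - J.card := by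
    have h := Finset.card_compl J
    rw [Fintype.card_fin] at h
    rw [h, Nat.cast_sub (by simpa using Finset.card_le_univ J)]
  -- upper bound on exp (usc i) for i ∈ I
  have husc_ub_I : ∀ i ∈ I, Real.exp (usc i) ≤ μmax / ((m:ℝ) * ε * Kmin) := by
    intro i hi
    have h1 := hopt_u i hi
    have h2 : Real.exp (usc i) * ((m:ℝ) * Kmin * (ε * κ)) ≤ μsc i := by
      rw [hμsc]
      have hc : Real.exp (usc i) * ((m:ℝ) * Kmin * (ε * κ)) = ∑ _j : Fin m, Real.exp (usc i) * (Kmin * (ε * κ)) := by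
        rw [Finset.sum_const, Finset.card_univ, Fintype.card_fin, nsmul_eq_mul]; ring
      rw [hc]
      refine Finset.sum_le_sum fun j _ => ?_
      have e5 := mul_le_mul_of_nonneg_left
        (mul_le_mul (hKmin_le i j) (hvsc_feas j) hεκ'.le (hKpos i j).le)
        (Real.exp_pos (usc i)).le
      calc Real.exp (usc i) * (Kmin * (ε * κ)) = Real.exp (usc i) * (Kmin * (ε * κ)) := rfl
        _ ≤ Real.exp (usc i) * (K i j * Real.exp (vsc j)) := e5
        _ = Real.exp (usc i) * K i j * Real.exp (vsc j) := by ring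
    rw [le_div_iff₀ (by positivity)]
    have h3 : μ i ≤ μmax := hμmax.2 i
    rw [h1] at h2
    have h4 : (Real.exp (usc i) * ((m:ℝ) * ε * Kmin)) * κ ≤ μmax * κ := by
      have hre : Real.exp (usc i) * ((m:ℝ) * Kmin * (ε * κ)) = (Real.exp (usc i) * ((m:ℝ) * ε * Kmin)) * κ := by ring
      have h5 : κ * μ i ≤ κ * μmax := mul_le_mul_of_nonneg_left h3 hκ.le
      rw [← hre]; linarith
    exact le_of_mul_le_mul_right h4 hκ
  set S : ℝ := ∑ i, Real.exp (usc i) with hSdef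
  have hSpos : 0 < S := Finset.sum_pos (fun i _ => Real.exp_pos _) ⟨⟨0, hn⟩, Finset.mem_univ _⟩
  have hS_ub : S ≤ (I.card:ℝ) * (μmax / ((m:ℝ) * ε * Kmin)) + ((n:ℝ) - I.card) * (ε/κ) := by
    have hsplit := Finset.sum_add_sum_compl I (fun i => Real.exp (usc i))
    have h1 : ∑ i ∈ I, Real.exp (usc i) ≤ (I.card:ℝ) * (μmax / ((m:ℝ)*ε*Kmin)) := by
      simpa [nsmul_eq_mul] using Finset.sum_le_card_nsmul I _ _ husc_ub_I
    have h2 : ∑ i ∈ Iᶜ, Real.exp (usc i) = ((Iᶜ).card : ℝ) * (ε/κ) := by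
      rw [Finset.sum_congr rfl (fun i hi => by
        rw [husc_out i (Finset.mem_compl.1 hi), Real.exp_log hεκ]),
        Finset.sum_const, nsmul_eq_mul]
    rw [hSdef, ← hsplit, h2, hcardI]
    linarith
  -- bounds on exp (vsc j) for j ∈ J
  have hv_ub : ∀ j ∈ J, Real.exp (vsc j) ≤ ν j / ((n:ℝ) * ε * Kmin) := by
    intro j hj
    have hcol : (n:ℝ) * (ε/κ) * Kmin ≤ ∑ i, Real.exp (usc i) * K i j := by
      have hc : (n:ℝ) * (ε/κ) * Kmin = ∑ _i : Fin n, (ε/κ) * Kmin := by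
        rw [Finset.sum_const, Finset.card_univ, Fintype.card_fin, nsmul_eq_mul]; ring
      rw [hc]
      exact Finset.sum_le_sum fun i _ =>
        mul_le_mul (husc_feas i) (hKmin_le i j) hKminpos.le (Real.exp_pos _).le
    have heq := hopt_v j hj
    rw [le_div_iff₀ (by positivity)]
    have h1 : ((n:ℝ) * (ε/κ) * Kmin) * Real.exp (vsc j) ≤ ν j / κ := by
      rw [← heq]; exact mul_le_mul_of_nonneg_right hcol (Real.exp_pos _).le
    have h2 : κ * (((n:ℝ)*(ε/κ)*Kmin) * Real.exp (vsc j)) = Real.exp (vsc j) * ((n:ℝ)*ε*Kmin) := by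
      field_simp
    have h3 : κ * (ν j / κ) = ν j := by field_simp
    have h4 := mul_le_mul_of_nonneg_left h1 hκ.le
    linarith
  have hv_lb : ∀ j ∈ J, νminJ / (κ * S) ≤ Real.exp (vsc j) := by
    intro j hj
    have hcolS : (∑ i, Real.exp (usc i) * K i j) ≤ S := by
      rw [hSdef]
      exact Finset.sum_le_sum fun i _ => by nlinarith [hKle1 i j, Real.exp_pos (usc i), hKpos i j]
    have heq := hopt_v j hj
    have h1 : ν j / κ ≤ S * Real.exp (vsc j) := by
      rw [← heq]; exact mul_le_mul_of_nonneg_right hcolS (Real.exp_pos _).le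
    rw [div_le_iff₀ (by positivity : (0:ℝ) < κ * S)]
    have h2 : νminJ ≤ ν j := hνminJ.2 j hj
    have h3 : κ * (ν j / κ) = ν j := by field_simp
    have h4 := mul_le_mul_of_nonneg_left h1 hκ.le
    nlinarith
  -- lower bound on μsc
  have hμsc_lb : ∀ i, (ε/κ) * Kmin * ((J.card:ℝ) * (νminJ/(κ*S))) ≤ μsc i := by
    intro i
    rw [hμsc]
    have h1 : ∑ j ∈ J, Real.exp (usc i) * K i j * Real.exp (vsc j)
        ≤ ∑ j, Real.exp (usc i) * K i j * Real.exp (vsc j) :=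
      Finset.sum_le_sum_of_subset_of_nonneg (Finset.subset_univ J)
        (fun j _ _ => by have := hKpos i j; positivity)
    refine le_trans ?_ h1
    have hb : (0:ℝ) < νminJ/(κ*S) := by positivity
    have h2 : ∀ j ∈ J, (ε/κ) * Kmin * (νminJ/(κ*S)) ≤ Real.exp (usc i) * K i j * Real.exp (vsc j) := by
      intro j hj
      exact mul_le_mul
        (mul_le_mul (husc_feas i) (hKmin_le i j) hKminpos.le (Real.exp_pos _).le)
        (hv_lb j hj) hb.le (by have := hKpos i j; positivity)
    calc (ε/κ) * Kmin * ((J.card:ℝ) * (νminJ/(κ*S)))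
        = (J.card:ℝ) * ((ε/κ) * Kmin * (νminJ/(κ*S))) := by ring
      _ ≤ ∑ j ∈ J, Real.exp (usc i) * K i j * Real.exp (vsc j) := by
          simpa [nsmul_eq_mul] using Finset.card_nsmul_le_sum J _ _ h2
  -- upper bound on μsc outside I
  have hμsc_ub : ∀ i ∉ I, μsc i ≤ (J.card:ℝ) * νmax/((n:ℝ)*κ*Kmin) + ((m:ℝ) - J.card) * ε^2 := by
    intro i hi
    have hux : Real.exp (usc i) = ε/κ := by rw [husc_out i hi, Real.exp_log hεκ]
    rw [hμsc, ← Finset.sum_add_sum_compl J (fun j => Real.exp (usc i) * K i j * Real.exp (vsc j))]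
    have h1 : ∑ j ∈ J, Real.exp (usc i) * K i j * Real.exp (vsc j)
        ≤ (J.card:ℝ) * νmax/((n:ℝ)*κ*Kmin) := by
      have hstep : ∀ j ∈ J, Real.exp (usc i) * K i j * Real.exp (vsc j)
          ≤ νmax/((n:ℝ)*κ*Kmin) := by
        intro j hj
        have h3 : Real.exp (vsc j) ≤ νmax/((n:ℝ)*ε*Kmin) := by
          refine (hv_ub j hj).trans ?_
          gcongr
          exact hνmax.2 j
        rw [hux]
        have hid : (ε/κ) * 1 * (νmax/((n:ℝ)*ε*Kmin)) = νmax/((n:ℝ)*κ*Kmin) := by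
          field_simp
        calc (ε/κ) * K i j * Real.exp (vsc j) ≤ (ε/κ) * 1 * (νmax/((n:ℝ)*ε*Kmin)) := by
              refine mul_le_mul ?_ h3 (Real.exp_pos _).le (by positivity)
              exact mul_le_mul_of_nonneg_left (hKle1 i j) hεκ.le
          _ = νmax/((n:ℝ)*κ*Kmin) := hid
      calc ∑ j ∈ J, Real.exp (usc i) * K i j * Real.exp (vsc j)
          ≤ (J.card:ℝ) * (νmax/((n:ℝ)*κ*Kmin)) := by
            simpa [nsmul_eq_mul] using Finset.sum_le_card_nsmul J _ _ hstep
        _ = (J.card:ℝ) * νmax/((n:ℝ)*κ*Kmin) := by ring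
    have h4 : ∑ j ∈ Jᶜ, Real.exp (usc i) * K i j * Real.exp (vsc j) ≤ ((m:ℝ) - J.card) * ε^2 := by
      have h5 : ∀ j ∈ Jᶜ, Real.exp (usc i) * K i j * Real.exp (vsc j) ≤ ε^2 := by
        intro j hj
        have hvx : Real.exp (vsc j) = ε*κ := by
          rw [hvsc_out j (Finset.mem_compl.1 hj), Real.exp_log hεκ']
        rw [hux, hvx]
        have hb1 := hKle1 i j
        have hb2 := hKpos i j
        have hid : ε/κ * 1 * (ε*κ) = ε^2 := by field_simp
        calc ε/κ * K i j * (ε*κ) ≤ ε/κ * 1 * (ε*κ) := by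
              refine mul_le_mul_of_nonneg_right (mul_le_mul_of_nonneg_left hb1 hεκ.le) hεκ'.le
          _ = ε^2 := hid
      calc ∑ j ∈ Jᶜ, Real.exp (usc i) * K i j * Real.exp (vsc j) ≤ ((Jᶜ).card : ℝ) * ε^2 := by
            simpa [nsmul_eq_mul] using Finset.sum_le_card_nsmul Jᶜ _ _ h5
        _ = ((m:ℝ) - J.card) * ε^2 := by rw [hcardJ]
    linarith
  -- the log argument
  set ARG : ℝ := κ * ((n : ℝ) - I.card + 1) * μmax / ((J.card : ℝ) * Kmin * νminJ)
      + (I.card : ℝ) * κ ^ 2 * μmax ^ 2 / ((m : ℝ) * (J.card : ℝ) * ε ^ 2 * Kmin ^ 2 * νminJ)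
      with hARG
  have hARGL : μmax ≤ ARG * ((ε/κ) * Kmin * ((J.card:ℝ) * (νminJ/(κ*S)))) := by
    have hexpand : ARG * ((ε/κ) * Kmin * ((J.card:ℝ)*(νminJ/(κ*S))))
        = μmax * (((I.card:ℝ)*(μmax/((m:ℝ)*ε*Kmin)) + ((n:ℝ)-I.card)*(ε/κ)) + ε/κ) / S := by
      rw [hARG]; field_simp; ring
    rw [hexpand, le_div_iff₀ hSpos]
    have h1 := mul_le_mul_of_nonneg_left hS_ub hμmaxpos.le
    have h2 : 0 < μmax * (ε/κ) := mul_pos hμmaxpos hεκ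
    nlinarith
  have hratio : ∀ i, μ i ≤ ARG * μsc i := by
    intro i
    have hARG1 : (1:ℝ) ≤ ARG := hlogarg
    calc μ i ≤ μmax := hμmax.2 i
      _ ≤ ARG * ((ε/κ) * Kmin * ((J.card:ℝ) * (νminJ/(κ*S)))) := hARGL
      _ ≤ ARG * μsc i := mul_le_mul_of_nonneg_left (hμsc_lb i) (by linarith)
  -- per-element bounds
  have hIbound : ∀ i ∈ I, μsc i - μ i + μ i * Real.log (μ i / μsc i)
      ≤ (κ - Real.log κ - 1) * μmax := by
    intro i hi
    have h1 := hopt_u i hi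
    have hμne : μ i ≠ 0 := (hμpos i).ne'
    have h2 : μ i / μsc i = κ⁻¹ := by
      rw [h1, mul_comm, div_mul_cancel_left₀ hμne]
    rw [h2, h1, Real.log_inv]
    have h3 : Real.log κ ≤ κ - 1 := Real.log_le_sub_one_of_pos hκ
    have h4 : μ i ≤ μmax := hμmax.2 i
    nlinarith [hμpos i]
  have hOut : ∀ i ∈ Iᶜ, μsc i - μ i + μ i * Real.log (μ i / μsc i)
      ≤ (J.card:ℝ) * νmax/((n:ℝ)*κ*Kmin) + ((m:ℝ) - J.card) * ε^2 - μmin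
        + μmax * Real.log ARG := by
    intro i hi
    have hi' := Finset.mem_compl.1 hi
    have h1 := hμsc_ub i hi'
    have h2 : μmin ≤ μ i := hμmin.2 i
    have hr : μ i / μsc i ≤ ARG := by
      rw [div_le_iff₀ (hμscpos i)]; exact hratio i
    have hlA : 0 ≤ Real.log ARG := Real.log_nonneg hlogarg
    have hlog : μ i * Real.log (μ i / μsc i) ≤ μmax * Real.log ARG := by
      have hlr : Real.log (μ i / μsc i) ≤ Real.log ARG :=
        Real.log_le_log (div_pos (hμpos i) (hμscpos i)) hr
      rcases le_or_gt (Real.log (μ i / μsc i)) 0 with h|h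
      · exact le_trans (mul_nonpos_of_nonneg_of_nonpos (hμpos i).le h)
          (mul_nonneg hμmaxpos.le hlA)
      · calc μ i * Real.log (μ i / μsc i) ≤ μmax * Real.log (μ i / μsc i) :=
            mul_le_mul_of_nonneg_right (hμmax.2 i) h.le
          _ ≤ μmax * Real.log ARG := mul_le_mul_of_nonneg_left hlr hμmaxpos.le
    linarith
  -- assemble
  rw [← Finset.sum_add_sum_compl I (fun i => μsc i - μ i + μ i * Real.log (μ i / μsc i))]
  have hA : ∑ i ∈ I, (μsc i - μ i + μ i * Real.log (μ i / μsc i))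
      ≤ (I.card:ℝ) * ((κ - Real.log κ - 1) * μmax) := by
    simpa [nsmul_eq_mul] using Finset.sum_le_card_nsmul I _ _ hIbound
  have hB : ∑ i ∈ Iᶜ, (μsc i - μ i + μ i * Real.log (μ i / μsc i))
      ≤ ((n:ℝ) - I.card) * ((J.card:ℝ) * νmax/((n:ℝ)*κ*Kmin) + ((m:ℝ) - J.card) * ε^2 - μmin
          + μmax * Real.log ARG) := by
    have h := Finset.sum_le_card_nsmul Iᶜ _ _ hOut
    rw [nsmul_eq_mul, hcardI] at h
    exact h
  linarith
end

section
/- Lower bound on screened marginal components on the inactive set (proof of Proposition 2): For every i ∉ I, the screened optimal solution satisfies (ε/κ) Σ_{j=1}^m K_{ij} e^{v^sc_j} ≥ m·m_b·ε²·K_min²·(min_{j∈J} ν_j) / ( κ·( (n − n_b)·m·ε²·K_min + m·ε²·K_min + n_b·κ·(max_{i'∈I} μ_{i'}) ) ). -/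
open scoped Classical

lemma sum_sub_single' {α : Type*} [Fintype α] [DecidableEq α] (G H : α → ℝ) (j0 : α)
    (h : ∀ j, j ≠ j0 → G j = H j) :
    (∑ j, G j) - (∑ j, H j) = G j0 - H j0 := by
  rw [← Finset.sum_sub_distrib]
  exact Finset.sum_eq_single j0 (fun b _ hb => by rw [h b hb]; ring)
    (fun h' => absurd (Finset.mem_univ j0) h')

lemma limit_aux (P Q δ : ℝ) (hδ : 0 < δ) (hP : 0 ≤ P)
    (h : ∀ t, 0 < t → t < δ → P * (1 - t) ≤ Q) : P ≤ Q := by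
  by_contra hc
  push_neg at hc
  have h0 := h (δ/2) (by linarith) (by linarith)
  rcases eq_or_lt_of_le hP with hP0 | hPpos
  · nlinarith
  · set t := min (δ/2) ((P - Q)/(2*P)) with ht
    have ht1 : 0 < t := lt_min (by linarith) (div_pos (by linarith) (by linarith))
    have ht2 : t < δ := lt_of_le_of_lt (min_le_left _ _) (by linarith)
    have ht3 : t ≤ (P - Q)/(2*P) := min_le_right _ _
    have ht4 : t * (2*P) ≤ P - Q := by
      rw [← le_div_iff₀ (by linarith)]; exact ht3
    have := h t ht1 ht2
    nlinarith

lemma exp_upper (t : ℝ) (h0 : 0 < t) (h1 : t < 1) : (Real.exp t - 1) * (1 - t) ≤ t := by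
  have h := Real.add_one_le_exp (-t)
  have h3 : 0 < Real.exp t := Real.exp_pos t
  have h2 : Real.exp (-t) * Real.exp t = 1 := by rw [← Real.exp_add]; simp
  have key : (1 - t) * Real.exp t ≤ 1 := by
    nlinarith [mul_le_mul_of_nonneg_right h h3.le]
  nlinarith

lemma exp_lower (t : ℝ) (h0 : 0 < t) : t * (1 - t) ≤ 1 - Real.exp (-t) := by
  have h := Real.add_one_le_exp t
  have h3 : 0 < Real.exp (-t) := Real.exp_pos _
  have h2 : Real.exp (-t) * Real.exp t = 1 := by rw [← Real.exp_add]; simp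
  have hE1 : (1 + t) * Real.exp (-t) ≤ 1 := by
    nlinarith [mul_le_mul_of_nonneg_right h h3.le]
  have hElt : Real.exp (-t) < 1 := by
    rw [Real.exp_lt_one_iff]; linarith
  rcases le_or_gt 1 t with h1 | h1
  · nlinarith
  · nlinarith [sq_nonneg t, sq_nonneg (1 - t)]

set_option maxHeartbeats 1000000 in
theorem lower_bound_inactive_marginal
    (n m : ℕ) (hn : 0 < n) (hm : 0 < m)
    (C : Fin n → Fin m → ℝ) (hC : ∀ i j, 0 ≤ C i j)
    (η : ℝ) (hη : 0 < η)
    (K : Fin n → Fin m → ℝ) (hK : ∀ i j, K i j = Real.exp (-(C i j) / η))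
    (μ : Fin n → ℝ) (ν : Fin m → ℝ)
    (hμpos : ∀ i, 0 < μ i) (hνpos : ∀ j, 0 < ν j)
    (hμsum : ∑ i, μ i = 1) (hνsum : ∑ j, ν j = 1)
    (ε κ : ℝ) (hε : 0 < ε) (hκ : 0 < κ)
    (I : Finset (Fin n)) (hI : ∀ i, i ∈ I ↔ ε ^ 2 / κ * (∑ j, K i j) ≤ μ i)
    (J : Finset (Fin m)) (hJ : ∀ j, j ∈ J ↔ κ * ε ^ 2 * (∑ i, K i j) ≤ ν j)
    (hIne : I.Nonempty) (hJne : J.Nonempty)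
    (Kmin : ℝ) (hKmin_le : ∀ i j, Kmin ≤ K i j) (hKmin_mem : ∃ i j, K i j = Kmin)
    (usc : Fin n → ℝ) (vsc : Fin m → ℝ)
    (husc_feas : ∀ i, ε / κ ≤ Real.exp (usc i))
    (hvsc_feas : ∀ j, ε * κ ≤ Real.exp (vsc j))
    (husc_out : ∀ i ∉ I, usc i = Real.log (ε / κ))
    (hvsc_out : ∀ j ∉ J, vsc j = Real.log (ε * κ))
    (hsc_min : ∀ (u : Fin n → ℝ) (v : Fin m → ℝ),
      (∀ i, ε / κ ≤ Real.exp (u i)) → (∀ j, ε * κ ≤ Real.exp (v j)) →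
      (∀ i ∉ I, u i = Real.log (ε / κ)) → (∀ j ∉ J, v j = Real.log (ε * κ)) →
      (∑ i, ∑ j, Real.exp (usc i) * K i j * Real.exp (vsc j))
          - κ * (∑ i, usc i * μ i) - (1 / κ) * (∑ j, vsc j * ν j)
        ≤ (∑ i, ∑ j, Real.exp (u i) * K i j * Real.exp (v j))
          - κ * (∑ i, u i * μ i) - (1 / κ) * (∑ j, v j * ν j))
    (hactive_u : ∀ i ∈ I, ε / κ < Real.exp (usc i))
    (hactive_v : ∀ j ∈ J, ε * κ < Real.exp (vsc j))
    (νminJ μmaxI : ℝ)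
    (hνminJ : (∃ j ∈ J, ν j = νminJ) ∧ ∀ j ∈ J, νminJ ≤ ν j)
    (hμmaxI : (∃ i ∈ I, μ i = μmaxI) ∧ ∀ i ∈ I, μ i ≤ μmaxI) :
    ∀ i ∉ I,
      (m : ℝ) * J.card * ε ^ 2 * Kmin ^ 2 * νminJ /
          (κ * (((n : ℝ) - I.card) * m * ε ^ 2 * Kmin + (m : ℝ) * ε ^ 2 * Kmin
            + (I.card : ℝ) * κ * μmaxI))
        ≤ ε / κ * ∑ j, K i j * Real.exp (vsc j) := by
  -- basic positivity facts
  have hKpos : ∀ i j, 0 < K i j := fun i j => by rw [hK]; exact Real.exp_pos _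
  have hK1 : ∀ i j, K i j ≤ 1 := fun i j => by
    rw [hK]
    have hle : -(C i j) / η ≤ 0 := by
      rw [neg_div]
      exact neg_nonpos_of_nonneg (div_nonneg (hC i j) hη.le)
    calc Real.exp (-(C i j) / η) ≤ Real.exp 0 := Real.exp_le_exp.mpr hle
      _ = 1 := Real.exp_zero
  have hKminpos : 0 < Kmin := by
    obtain ⟨i, j, hij⟩ := hKmin_mem; rw [← hij]; exact hKpos i j
  have hεκ : 0 < ε / κ := div_pos hε hκ
  have hεκ' : 0 < ε * κ := mul_pos hε hκ
  have hμmaxpos : 0 < μmaxI := by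
    obtain ⟨⟨i0, hi0, hie⟩, _⟩ := hμmaxI; rw [← hie]; exact hμpos i0
  have hνminpos : 0 < νminJ := by
    obtain ⟨⟨j0, hj0, hje⟩, _⟩ := hνminJ; rw [← hje]; exact hνpos j0
  have hmR : (0:ℝ) < m := by exact_mod_cast hm
  have hIcard1 : (1:ℝ) ≤ I.card := by exact_mod_cast Finset.card_pos.mpr hIne
  have hJcard1 : (1:ℝ) ≤ J.card := by exact_mod_cast Finset.card_pos.mpr hJne
  have hIcardn' : I.card ≤ n := by simpa using Finset.card_le_univ I
  have hIcardn : (I.card : ℝ) ≤ n := by exact_mod_cast hIcardn'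
  -- stationarity for v on J
  have StatV : ∀ j0 ∈ J, ν j0 / κ ≤ Real.exp (vsc j0) * ∑ i, Real.exp (usc i) * K i j0 := by
    intro j0 hj0
    apply limit_aux _ _ 1 one_pos (le_of_lt (div_pos (hνpos j0) hκ))
    intro t ht0 ht1
    set v' : Fin m → ℝ := Function.update vsc j0 (vsc j0 + t) with hv'
    have hfeas : ∀ j, ε * κ ≤ Real.exp (v' j) := by
      intro j
      by_cases hj : j = j0
      · subst hj
        simp only [hv', Function.update_self]
        exact (hvsc_feas j).trans (Real.exp_le_exp.mpr (by linarith))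
      · simp only [hv', Function.update_apply, if_neg hj]; exact hvsc_feas j
    have hout : ∀ j ∉ J, v' j = Real.log (ε * κ) := by
      intro j hj
      have hne : j ≠ j0 := fun h => hj (h ▸ hj0)
      simp only [hv', Function.update_apply, if_neg hne]; exact hvsc_out j hj
    have hmin := hsc_min usc v' husc_feas hfeas husc_out hout
    set Q : ℝ := Real.exp (vsc j0) * ∑ i, Real.exp (usc i) * K i j0 with hQ
    have hQ0 : 0 ≤ Q := by
      apply mul_nonneg (Real.exp_pos _).le
      exact Finset.sum_nonneg fun i _ => mul_nonneg (Real.exp_pos _).le (hKpos i _).le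
    have hA : (∑ i, ∑ j, Real.exp (usc i) * K i j * Real.exp (v' j))
        - (∑ i, ∑ j, Real.exp (usc i) * K i j * Real.exp (vsc j))
        = (Real.exp t - 1) * Q := by
      rw [← Finset.sum_sub_distrib]
      have hi : ∀ i : Fin n,
          (∑ j, Real.exp (usc i) * K i j * Real.exp (v' j))
            - (∑ j, Real.exp (usc i) * K i j * Real.exp (vsc j))
          = (Real.exp t - 1) * (Real.exp (vsc j0) * (Real.exp (usc i) * K i j0)) := by
        intro i
        rw [sum_sub_single' _ _ j0 (fun j hj => by
          simp only [hv', Function.update_apply, if_neg hj])]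
        simp only [hv', Function.update_self, Real.exp_add]
        ring
      rw [hQ, Finset.mul_sum, Finset.mul_sum]
      exact Finset.sum_congr rfl fun i _ => hi i
    have hV : (∑ j, v' j * ν j) - (∑ j, vsc j * ν j) = t * ν j0 := by
      rw [sum_sub_single' _ _ j0 (fun j hj => by
        simp only [hv', Function.update_apply, if_neg hj])]
      simp only [hv', Function.update_self]
      ring
    have hineq : (1/κ) * (t * ν j0) ≤ (Real.exp t - 1) * Q := by
      rw [← hV, ← hA]; linarith
    have hup := exp_upper t ht0 ht1
    have e1 : ((1/κ) * (t * ν j0)) * (1 - t) ≤ ((Real.exp t - 1) * Q) * (1 - t) :=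
      mul_le_mul_of_nonneg_right hineq (by linarith)
    have e2 : ((Real.exp t - 1) * (1 - t)) * Q ≤ t * Q :=
      mul_le_mul_of_nonneg_right hup hQ0
    have goal' : t * (ν j0 / κ * (1 - t)) ≤ t * Q := by
      have e3 : t * (ν j0 / κ * (1 - t)) = ((1/κ) * (t * ν j0)) * (1 - t) := by ring
      have e4 : ((Real.exp t - 1) * Q) * (1 - t) = ((Real.exp t - 1) * (1 - t)) * Q := by
        ring
      linarith [e1, e2]
    exact le_of_mul_le_mul_left goal' ht0
  -- stationarity for u on I
  have StatU : ∀ i0 ∈ I,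
      Real.exp (usc i0) * (∑ j, K i0 j * Real.exp (vsc j)) ≤ κ * μ i0 := by
    intro i0 hi0
    have hδpos : 0 < usc i0 - Real.log (ε / κ) := by
      have h2 : Real.exp (Real.log (ε / κ)) < Real.exp (usc i0) := by
        rw [Real.exp_log hεκ]; exact hactive_u i0 hi0
      have := Real.exp_lt_exp.mp h2
      linarith
    set δ := min (usc i0 - Real.log (ε / κ)) 1 with hδ
    have hδ0 : 0 < δ := lt_min hδpos one_pos
    apply limit_aux _ _ δ hδ0 (by
      apply mul_nonneg (Real.exp_pos _).le
      exact Finset.sum_nonneg fun j _ => mul_nonneg (hKpos _ j).le (Real.exp_pos _).le)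
    intro t ht0 htδ
    have htδ1 : t < usc i0 - Real.log (ε / κ) := lt_of_lt_of_le htδ (min_le_left _ _)
    have ht1 : t < 1 := lt_of_lt_of_le htδ (min_le_right _ _)
    set u' : Fin n → ℝ := Function.update usc i0 (usc i0 - t) with hu'
    have hfeas : ∀ i, ε / κ ≤ Real.exp (u' i) := by
      intro i
      by_cases hi : i = i0
      · subst hi
        simp only [hu', Function.update_self]
        calc ε / κ = Real.exp (Real.log (ε / κ)) := (Real.exp_log hεκ).symm
          _ ≤ Real.exp (usc i - t) := Real.exp_le_exp.mpr (by linarith)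
      · simp only [hu', Function.update_apply, if_neg hi]; exact husc_feas i
    have hout : ∀ i ∉ I, u' i = Real.log (ε / κ) := by
      intro i hi
      have hne : i ≠ i0 := fun h => hi (h ▸ hi0)
      simp only [hu', Function.update_apply, if_neg hne]; exact husc_out i hi
    have hmin := hsc_min u' vsc hfeas hvsc_feas hout hvsc_out
    set Q : ℝ := Real.exp (usc i0) * ∑ j, K i0 j * Real.exp (vsc j) with hQ
    have hQ0 : 0 ≤ Q := by
      apply mul_nonneg (Real.exp_pos _).le
      exact Finset.sum_nonneg fun j _ => mul_nonneg (hKpos _ j).le (Real.exp_pos _).le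
    have hexpsub : Real.exp (usc i0 - t) = Real.exp (-t) * Real.exp (usc i0) := by
      rw [← Real.exp_add]; ring_nf
    have hA : (∑ i, ∑ j, Real.exp (u' i) * K i j * Real.exp (vsc j))
        - (∑ i, ∑ j, Real.exp (usc i) * K i j * Real.exp (vsc j))
        = (Real.exp (-t) - 1) * Q := by
      rw [sum_sub_single' _ _ i0 (fun i hi => by
        simp only [hu', Function.update_apply, if_neg hi])]
      have hui0 : u' i0 = usc i0 - t := by simp [hu']
      rw [hui0, hQ, ← Finset.sum_sub_distrib, Finset.mul_sum, Finset.mul_sum]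
      refine Finset.sum_congr rfl fun j _ => ?_
      rw [hexpsub]; ring
    have hU : (∑ i, u' i * μ i) - (∑ i, usc i * μ i) = -t * μ i0 := by
      rw [sum_sub_single' _ _ i0 (fun i hi => by
        simp only [hu', Function.update_apply, if_neg hi])]
      have hui0 : u' i0 = usc i0 - t := by simp [hu']
      rw [hui0]; ring
    have hineq : (1 - Real.exp (-t)) * Q ≤ t * (κ * μ i0) := by
      have h1 : κ * ((∑ i, u' i * μ i) - (∑ i, usc i * μ i))
          ≤ (∑ i, ∑ j, Real.exp (u' i) * K i j * Real.exp (vsc j))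
            - (∑ i, ∑ j, Real.exp (usc i) * K i j * Real.exp (vsc j)) := by
        have hd : κ * ((∑ i, u' i * μ i) - (∑ i, usc i * μ i))
            = κ * (∑ i, u' i * μ i) - κ * (∑ i, usc i * μ i) := by ring
        rw [hd]; linarith [hmin]
      rw [hU, hA] at h1
      nlinarith [h1]
    have hlow := exp_lower t ht0
    have e2 : (t * (1 - t)) * Q ≤ (1 - Real.exp (-t)) * Q :=
      mul_le_mul_of_nonneg_right hlow hQ0
    have goal' : t * (Q * (1 - t)) ≤ t * (κ * μ i0) := by nlinarith [e2, hineq]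
    exact le_of_mul_le_mul_left goal' ht0
  -- upper bound on exp (usc i) for i in I
  have hmεK : 0 < (m : ℝ) * ε * Kmin := mul_pos (mul_pos hmR hε) hKminpos
  have uBound : ∀ i ∈ I, Real.exp (usc i) ≤ μmaxI / ((m : ℝ) * ε * Kmin) := by
    intro i hi
    have hT : (m : ℝ) * (Kmin * (ε * κ)) ≤ ∑ j, K i j * Real.exp (vsc j) := by
      calc (m : ℝ) * (Kmin * (ε * κ)) = ∑ _j : Fin m, Kmin * (ε * κ) := by
            rw [Finset.sum_const, Finset.card_univ, Fintype.card_fin, nsmul_eq_mul]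
        _ ≤ ∑ j, K i j * Real.exp (vsc j) := Finset.sum_le_sum fun j _ =>
            mul_le_mul (hKmin_le i j) (hvsc_feas j) hεκ'.le (hKpos i j).le
    have h1 : Real.exp (usc i) * ((m : ℝ) * (Kmin * (ε * κ))) ≤ κ * μ i :=
      le_trans (mul_le_mul_of_nonneg_left hT (Real.exp_pos _).le) (StatU i hi)
    have h2 : μ i ≤ μmaxI := hμmaxI.2 i hi
    rw [le_div_iff₀ hmεK]
    have h5 : κ * (Real.exp (usc i) * ((m : ℝ) * ε * Kmin)) ≤ κ * μmaxI := by
      calc κ * (Real.exp (usc i) * ((m : ℝ) * ε * Kmin))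
          = Real.exp (usc i) * ((m : ℝ) * (Kmin * (ε * κ))) := by ring
        _ ≤ κ * μ i := h1
        _ ≤ κ * μmaxI := mul_le_mul_of_nonneg_left h2 hκ.le
    exact le_of_mul_le_mul_left h5 hκ
  -- upper bound on column sums
  set Smax : ℝ := ((n : ℝ) - I.card) * (ε / κ) + I.card * (μmaxI / ((m : ℝ) * ε * Kmin))
    with hSmax
  have hSmaxpos : 0 < Smax := by
    have h1 : 0 ≤ ((n : ℝ) - I.card) * (ε / κ) := mul_nonneg (by linarith) hεκ.le
    have h2 : 0 < (I.card : ℝ) * (μmaxI / ((m : ℝ) * ε * Kmin)) :=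
      mul_pos (by linarith) (div_pos hμmaxpos hmεK)
    rw [hSmax]; linarith
  have Sbound : ∀ j, (∑ i, Real.exp (usc i) * K i j) ≤ Smax := by
    intro j
    have h1 : (∑ i, Real.exp (usc i) * K i j) ≤ ∑ i, Real.exp (usc i) :=
      Finset.sum_le_sum fun i _ =>
        mul_le_of_le_one_right (Real.exp_pos _).le (hK1 i j)
    have h2 : ∑ i ∈ I, Real.exp (usc i) ≤ (I.card : ℝ) * (μmaxI / ((m : ℝ) * ε * Kmin)) := by
      have := Finset.sum_le_card_nsmul I (fun i => Real.exp (usc i))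
        (μmaxI / ((m : ℝ) * ε * Kmin)) (fun i hi => uBound i hi)
      rwa [nsmul_eq_mul] at this
    have h3 : ∑ i ∈ Iᶜ, Real.exp (usc i) = ((n : ℝ) - I.card) * (ε / κ) := by
      have he : ∀ i ∈ Iᶜ, Real.exp (usc i) = ε / κ := by
        intro i hi
        rw [husc_out i (Finset.mem_compl.mp hi), Real.exp_log hεκ]
      rw [Finset.sum_congr rfl he, Finset.sum_const, nsmul_eq_mul, Finset.card_compl,
        Fintype.card_fin, Nat.cast_sub hIcardn']
    have h4 : ∑ i ∈ I, Real.exp (usc i) + ∑ i ∈ Iᶜ, Real.exp (usc i)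
        = ∑ i, Real.exp (usc i) := Finset.sum_add_sum_compl I _
    rw [hSmax]; linarith
  -- lower bound on exp (vsc j) for j in J
  have vLow : ∀ j ∈ J, νminJ / (κ * Smax) ≤ Real.exp (vsc j) := by
    intro j hj
    have h1 := StatV j hj
    have h2 : Real.exp (vsc j) * (∑ i, Real.exp (usc i) * K i j)
        ≤ Real.exp (vsc j) * Smax :=
      mul_le_mul_of_nonneg_left (Sbound j) (Real.exp_pos _).le
    have h3 : νminJ ≤ ν j := hνminJ.2 j hj
    rw [div_le_iff₀ (mul_pos hκ hSmaxpos)]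
    have h4 : ν j / κ ≤ Real.exp (vsc j) * Smax := le_trans h1 h2
    have h5 : ν j ≤ κ * (Real.exp (vsc j) * Smax) := by
      rw [div_le_iff₀ hκ] at h4
      nlinarith [h4]
    nlinarith [h5, h3]
  -- assembly
  intro i _hi
  have step1 : (J.card : ℝ) * (Kmin * (νminJ / (κ * Smax)))
      ≤ ∑ j, K i j * Real.exp (vsc j) := by
    calc (J.card : ℝ) * (Kmin * (νminJ / (κ * Smax)))
        = ∑ _j ∈ J, Kmin * (νminJ / (κ * Smax)) := by
          rw [Finset.sum_const, nsmul_eq_mul]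
      _ ≤ ∑ j ∈ J, K i j * Real.exp (vsc j) := Finset.sum_le_sum fun j hj =>
          mul_le_mul (hKmin_le i j) (vLow j hj)
            (le_of_lt (div_pos hνminpos (mul_pos hκ hSmaxpos))) (hKpos i j).le
      _ ≤ ∑ j, K i j * Real.exp (vsc j) :=
          Finset.sum_le_sum_of_subset_of_nonneg (Finset.subset_univ J)
            (fun j _ _ => mul_nonneg (hKpos i j).le (Real.exp_pos _).le)
  have hD'pos : 0 < ((n : ℝ) - I.card) * m * ε ^ 2 * Kmin + (I.card : ℝ) * κ * μmaxI := by
    have h1 : 0 ≤ ((n : ℝ) - I.card) * m * ε ^ 2 * Kmin :=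
      mul_nonneg (mul_nonneg (mul_nonneg (by linarith) hmR.le) (by positivity)) hKminpos.le
    have h2 : 0 < (I.card : ℝ) * κ * μmaxI :=
      mul_pos (mul_pos (by linarith) hκ) hμmaxpos
    linarith
  have hNnn : 0 ≤ (m : ℝ) * J.card * ε ^ 2 * Kmin ^ 2 * νminJ :=
    mul_nonneg (by positivity) hνminpos.le
  have hEq : ε / κ * ((J.card : ℝ) * (Kmin * (νminJ / (κ * Smax))))
      = (m : ℝ) * J.card * ε ^ 2 * Kmin ^ 2 * νminJ /
        (κ * (((n : ℝ) - I.card) * m * ε ^ 2 * Kmin + (I.card : ℝ) * κ * μmaxI)) := by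
    have hκ0 : κ ≠ 0 := ne_of_gt hκ
    have hm0 : (m:ℝ) ≠ 0 := ne_of_gt hmR
    have hε0 : ε ≠ 0 := ne_of_gt hε
    have hK0 : Kmin ≠ 0 := ne_of_gt hKminpos
    have hD0 : ((n:ℝ) - I.card) * m * ε ^ 2 * Kmin + (I.card : ℝ) * κ * μmaxI ≠ 0 :=
      ne_of_gt hD'pos
    have hS0 : Smax ≠ 0 := ne_of_gt hSmaxpos
    have hkey : κ * Smax * ((m : ℝ) * ε * Kmin)
        = ((n : ℝ) - I.card) * m * ε ^ 2 * Kmin + (I.card : ℝ) * κ * μmaxI := by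
      rw [hSmax]
      field_simp
    rw [← hkey]
    field_simp
  have hmono : (m : ℝ) * J.card * ε ^ 2 * Kmin ^ 2 * νminJ /
        (κ * (((n : ℝ) - I.card) * m * ε ^ 2 * Kmin + (m : ℝ) * ε ^ 2 * Kmin
          + (I.card : ℝ) * κ * μmaxI))
      ≤ (m : ℝ) * J.card * ε ^ 2 * Kmin ^ 2 * νminJ /
        (κ * (((n : ℝ) - I.card) * m * ε ^ 2 * Kmin + (I.card : ℝ) * κ * μmaxI)) := by
    apply div_le_div_of_nonneg_left hNnn (mul_pos hκ hD'pos)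
    have h1 : 0 < (m : ℝ) * ε ^ 2 * Kmin := by
      exact mul_pos (mul_pos hmR (by positivity)) hKminpos
    nlinarith [h1, hκ]
  calc (m : ℝ) * J.card * ε ^ 2 * Kmin ^ 2 * νminJ /
        (κ * (((n : ℝ) - I.card) * m * ε ^ 2 * Kmin + (m : ℝ) * ε ^ 2 * Kmin
          + (I.card : ℝ) * κ * μmaxI))
      ≤ (m : ℝ) * J.card * ε ^ 2 * Kmin ^ 2 * νminJ /
        (κ * (((n : ℝ) - I.card) * m * ε ^ 2 * Kmin + (I.card : ℝ) * κ * μmaxI)) := hmono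
    _ = ε / κ * ((J.card : ℝ) * (Kmin * (νminJ / (κ * Smax)))) := hEq.symm
    _ ≤ ε / κ * ∑ j, K i j * Real.exp (vsc j) :=
        mul_le_mul_of_nonneg_left step1 hεκ.le
end

section
/- Lemma 2 (ℓ1 norm of the screened marginal μ^sc, explicit form): ‖μ^sc‖₁ ≤ κ·Σ_{i∈I} μ_i + (n − n_b)·( m_b·(max_{j∈J} ν_j)/(n κ K_min) + (m − m_b)·ε² ), where ‖·‖₁ is the ℓ1 norm. -/
open scoped Classical

lemma stat_aux (a b δ : ℝ) (hδ : 0 < δ)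
    (h : ∀ t : ℝ, |t| < δ → 0 ≤ a * (Real.exp t - 1) - b * t) : a = b := by
  have hmin : IsLocalMin (fun t : ℝ => a * Real.exp t - b * t) 0 := by
    rw [IsLocalMin, IsMinFilter, Metric.eventually_nhds_iff]
    refine ⟨δ, hδ, fun t ht => ?_⟩
    have h2 := h t (by simpa [Real.dist_eq] using ht)
    simp only [Real.exp_zero]
    nlinarith [h2]
  have hd : HasDerivAt (fun t : ℝ => a * Real.exp t - b * t) (a - b) 0 := by
    have h1 : HasDerivAt (fun t : ℝ => a * Real.exp t) (a * Real.exp 0) 0 :=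
      (Real.hasDerivAt_exp 0).const_mul a
    have h2 : HasDerivAt (fun t : ℝ => b * t) (b * 1) 0 := (hasDerivAt_id 0).const_mul b
    have h3 := h1.sub h2
    simp only [Real.exp_zero, mul_one] at h3
    exact h3
  have h0 := hmin.deriv_eq_zero
  rw [hd.deriv] at h0
  linarith

theorem l1_norm_screened_marginal_mu
    (n m : ℕ) (hn : 0 < n) (hm : 0 < m)
    (C : Fin n → Fin m → ℝ) (hC : ∀ i j, 0 ≤ C i j)
    (η : ℝ) (hη : 0 < η)
    (K : Fin n → Fin m → ℝ) (hK : ∀ i j, K i j = Real.exp (-(C i j) / η))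
    (μ : Fin n → ℝ) (ν : Fin m → ℝ)
    (hμpos : ∀ i, 0 < μ i) (hνpos : ∀ j, 0 < ν j)
    (hμsum : ∑ i, μ i = 1) (hνsum : ∑ j, ν j = 1)
    (ε κ : ℝ) (hε : 0 < ε) (hκ : 0 < κ)
    (I : Finset (Fin n)) (hI : ∀ i, i ∈ I ↔ ε ^ 2 / κ * (∑ j, K i j) ≤ μ i)
    (J : Finset (Fin m)) (hJ : ∀ j, j ∈ J ↔ κ * ε ^ 2 * (∑ i, K i j) ≤ ν j)
    (hIne : I.Nonempty) (hJne : J.Nonempty)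
    (Kmin : ℝ) (hKmin_le : ∀ i j, Kmin ≤ K i j) (hKmin_mem : ∃ i j, K i j = Kmin)
    (usc : Fin n → ℝ) (vsc : Fin m → ℝ)
    (husc_feas : ∀ i, ε / κ ≤ Real.exp (usc i))
    (hvsc_feas : ∀ j, ε * κ ≤ Real.exp (vsc j))
    (husc_out : ∀ i ∉ I, usc i = Real.log (ε / κ))
    (hvsc_out : ∀ j ∉ J, vsc j = Real.log (ε * κ))
    (hsc_min : ∀ (u : Fin n → ℝ) (v : Fin m → ℝ),
      (∀ i, ε / κ ≤ Real.exp (u i)) → (∀ j, ε * κ ≤ Real.exp (v j)) →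
      (∀ i ∉ I, u i = Real.log (ε / κ)) → (∀ j ∉ J, v j = Real.log (ε * κ)) →
      (∑ i, ∑ j, Real.exp (usc i) * K i j * Real.exp (vsc j))
          - κ * (∑ i, usc i * μ i) - (1 / κ) * (∑ j, vsc j * ν j)
        ≤ (∑ i, ∑ j, Real.exp (u i) * K i j * Real.exp (v j))
          - κ * (∑ i, u i * μ i) - (1 / κ) * (∑ j, v j * ν j))
    (hactive_u : ∀ i ∈ I, ε / κ < Real.exp (usc i))
    (hactive_v : ∀ j ∈ J, ε * κ < Real.exp (vsc j))
    (μsc : Fin n → ℝ)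
    (hμsc : ∀ i, μsc i = ∑ j, Real.exp (usc i) * K i j * Real.exp (vsc j))
    (νmaxJ : ℝ)
    (hνmaxJ : (∃ j ∈ J, ν j = νmaxJ) ∧ ∀ j ∈ J, ν j ≤ νmaxJ) :
    ∑ i, |μsc i| ≤
      κ * (∑ i ∈ I, μ i) +
        ((n : ℝ) - I.card) *
          ((J.card : ℝ) * νmaxJ / ((n : ℝ) * κ * Kmin) + ((m : ℝ) - J.card) * ε ^ 2) := by
  have hKpos : ∀ i j, 0 < K i j := fun i j => by rw [hK]; exact Real.exp_pos _
  have hK1 : ∀ i j, K i j ≤ 1 := by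
    intro i j
    rw [hK]
    rw [Real.exp_le_one_iff]
    exact div_nonpos_of_nonpos_of_nonneg (by linarith [hC i j]) hη.le
  have hKminpos : 0 < Kmin := by
    obtain ⟨i, j, hij⟩ := hKmin_mem
    exact hij ▸ hKpos i j
  have hεκ : 0 < ε / κ := div_pos hε hκ
  have hεκ' : 0 < ε * κ := mul_pos hε hκ
  have hnpos : (0:ℝ) < (n:ℝ) := by exact_mod_cast hn
  -- Row stationarity
  have hrow : ∀ i ∈ I, μsc i = κ * μ i := by
    intro i0 hi0
    refine stat_aux _ _ (usc i0 - Real.log (ε / κ)) ?_ ?_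
    · have h1 := hactive_u i0 hi0
      have h2 : Real.log (ε / κ) < Real.log (Real.exp (usc i0)) := Real.log_lt_log hεκ h1
      rw [Real.log_exp] at h2
      linarith
    · intro t ht
      rw [abs_lt] at ht
      set u : Fin n → ℝ := Function.update usc i0 (usc i0 + t) with hu
      have hui0 : u i0 = usc i0 + t := Function.update_self i0 _ usc
      have hune : ∀ i, i ≠ i0 → u i = usc i := fun i hi => Function.update_of_ne hi _ usc
      have hufeas : ∀ i, ε / κ ≤ Real.exp (u i) := by
        intro i
        by_cases h : i = i0
        · subst h
          rw [hui0]
          have h1 : Real.log (ε / κ) ≤ usc i + t := by linarith [ht.1]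
          calc ε / κ = Real.exp (Real.log (ε / κ)) := (Real.exp_log hεκ).symm
            _ ≤ Real.exp (usc i + t) := Real.exp_le_exp.mpr h1
        · rw [hune i h]; exact husc_feas i
      have huout : ∀ i ∉ I, u i = Real.log (ε / κ) := by
        intro i hi
        have hne : i ≠ i0 := fun h => hi (h ▸ hi0)
        rw [hune i hne]; exact husc_out i hi
      have hmin := hsc_min u vsc hufeas hvsc_feas huout hvsc_out
      have hsum : (∑ i, ∑ j, Real.exp (u i) * K i j * Real.exp (vsc j))
          = (∑ i, ∑ j, Real.exp (usc i) * K i j * Real.exp (vsc j))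
            + (Real.exp t - 1) * μsc i0 := by
        have hterm : ∀ i : Fin n, (∑ j, Real.exp (u i) * K i j * Real.exp (vsc j))
            = (∑ j, Real.exp (usc i) * K i j * Real.exp (vsc j))
              + (if i = i0 then (Real.exp t - 1) * μsc i0 else 0) := by
          intro i
          by_cases h : i = i0
          · subst h
            rw [if_pos rfl, hui0]
            have h1 : (∑ j, Real.exp (usc i + t) * K i j * Real.exp (vsc j))
                = Real.exp t * μsc i := by
              rw [hμsc, Finset.mul_sum]
              exact Finset.sum_congr rfl fun j _ => by rw [Real.exp_add]; ring
            rw [h1, ← hμsc]; ring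
          · rw [hune i h, if_neg h, add_zero]
        calc (∑ i, ∑ j, Real.exp (u i) * K i j * Real.exp (vsc j))
            = ∑ i, ((∑ j, Real.exp (usc i) * K i j * Real.exp (vsc j))
              + (if i = i0 then (Real.exp t - 1) * μsc i0 else 0)) :=
              Finset.sum_congr rfl fun i _ => hterm i
          _ = (∑ i, ∑ j, Real.exp (usc i) * K i j * Real.exp (vsc j))
              + ∑ i, (if i = i0 then (Real.exp t - 1) * μsc i0 else 0) :=
              Finset.sum_add_distrib
          _ = _ := by rw [Finset.sum_ite_eq' Finset.univ i0 (fun _ => (Real.exp t - 1) * μsc i0),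
                if_pos (Finset.mem_univ i0)]
      have hlin : (∑ i, u i * μ i) = (∑ i, usc i * μ i) + t * μ i0 := by
        have hterm : ∀ i : Fin n, u i * μ i
            = usc i * μ i + (if i = i0 then t * μ i0 else 0) := by
          intro i
          by_cases h : i = i0
          · subst h; rw [if_pos rfl, hui0]; ring
          · rw [hune i h, if_neg h, add_zero]
        calc (∑ i, u i * μ i)
            = ∑ i, (usc i * μ i + (if i = i0 then t * μ i0 else 0)) :=
              Finset.sum_congr rfl fun i _ => hterm i
          _ = (∑ i, usc i * μ i) + ∑ i, (if i = i0 then t * μ i0 else 0) :=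
              Finset.sum_add_distrib
          _ = _ := by rw [Finset.sum_ite_eq' Finset.univ i0 (fun _ => t * μ i0),
                if_pos (Finset.mem_univ i0)]
      rw [hsum, hlin] at hmin
      nlinarith [hmin]
  -- Column stationarity
  have hcol : ∀ j ∈ J, (∑ i, Real.exp (usc i) * K i j * Real.exp (vsc j)) = 1 / κ * ν j := by
    intro j0 hj0
    refine stat_aux _ _ (vsc j0 - Real.log (ε * κ)) ?_ ?_
    · have h1 := hactive_v j0 hj0
      have h2 : Real.log (ε * κ) < Real.log (Real.exp (vsc j0)) := Real.log_lt_log hεκ' h1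
      rw [Real.log_exp] at h2
      linarith
    · intro t ht
      rw [abs_lt] at ht
      set v : Fin m → ℝ := Function.update vsc j0 (vsc j0 + t) with hv
      have hvj0 : v j0 = vsc j0 + t := Function.update_self j0 _ vsc
      have hvne : ∀ j, j ≠ j0 → v j = vsc j := fun j hj => Function.update_of_ne hj _ vsc
      have hvfeas : ∀ j, ε * κ ≤ Real.exp (v j) := by
        intro j
        by_cases h : j = j0
        · subst h
          rw [hvj0]
          have h1 : Real.log (ε * κ) ≤ vsc j + t := by linarith [ht.1]
          calc ε * κ = Real.exp (Real.log (ε * κ)) := (Real.exp_log hεκ').symm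
            _ ≤ Real.exp (vsc j + t) := Real.exp_le_exp.mpr h1
        · rw [hvne j h]; exact hvsc_feas j
      have hvout : ∀ j ∉ J, v j = Real.log (ε * κ) := by
        intro j hj
        have hne : j ≠ j0 := fun h => hj (h ▸ hj0)
        rw [hvne j hne]; exact hvsc_out j hj
      have hmin := hsc_min usc v husc_feas hvfeas husc_out hvout
      have hsum : (∑ i, ∑ j, Real.exp (usc i) * K i j * Real.exp (v j))
          = (∑ i, ∑ j, Real.exp (usc i) * K i j * Real.exp (vsc j))
            + (Real.exp t - 1) * (∑ i, Real.exp (usc i) * K i j0 * Real.exp (vsc j0)) := by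
        have hterm : ∀ i : Fin n, (∑ j, Real.exp (usc i) * K i j * Real.exp (v j))
            = (∑ j, Real.exp (usc i) * K i j * Real.exp (vsc j))
              + (Real.exp t - 1) * (Real.exp (usc i) * K i j0 * Real.exp (vsc j0)) := by
          intro i
          have hterm2 : ∀ j : Fin m, Real.exp (usc i) * K i j * Real.exp (v j)
              = Real.exp (usc i) * K i j * Real.exp (vsc j)
                + (if j = j0 then (Real.exp t - 1) * (Real.exp (usc i) * K i j0 * Real.exp (vsc j0)) else 0) := by
            intro j
            by_cases h : j = j0
            · subst h; rw [if_pos rfl, hvj0, Real.exp_add]; ring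
            · rw [hvne j h, if_neg h, add_zero]
          calc (∑ j, Real.exp (usc i) * K i j * Real.exp (v j))
              = ∑ j, (Real.exp (usc i) * K i j * Real.exp (vsc j)
                + (if j = j0 then (Real.exp t - 1) * (Real.exp (usc i) * K i j0 * Real.exp (vsc j0)) else 0)) :=
                Finset.sum_congr rfl fun j _ => hterm2 j
            _ = (∑ j, Real.exp (usc i) * K i j * Real.exp (vsc j))
                + ∑ j, (if j = j0 then (Real.exp t - 1) * (Real.exp (usc i) * K i j0 * Real.exp (vsc j0)) else 0) :=
                Finset.sum_add_distrib
            _ = _ := by rw [Finset.sum_ite_eq' Finset.univ j0, if_pos (Finset.mem_univ j0)]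
        calc (∑ i, ∑ j, Real.exp (usc i) * K i j * Real.exp (v j))
            = ∑ i, ((∑ j, Real.exp (usc i) * K i j * Real.exp (vsc j))
              + (Real.exp t - 1) * (Real.exp (usc i) * K i j0 * Real.exp (vsc j0))) :=
              Finset.sum_congr rfl fun i _ => hterm i
          _ = (∑ i, ∑ j, Real.exp (usc i) * K i j * Real.exp (vsc j))
              + ∑ i, (Real.exp t - 1) * (Real.exp (usc i) * K i j0 * Real.exp (vsc j0)) :=
              Finset.sum_add_distrib
          _ = _ := by rw [← Finset.mul_sum]
      have hlin : (∑ j, v j * ν j) = (∑ j, vsc j * ν j) + t * ν j0 := by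
        have hterm : ∀ j : Fin m, v j * ν j
            = vsc j * ν j + (if j = j0 then t * ν j0 else 0) := by
          intro j
          by_cases h : j = j0
          · subst h; rw [if_pos rfl, hvj0]; ring
          · rw [hvne j h, if_neg h, add_zero]
        calc (∑ j, v j * ν j)
            = ∑ j, (vsc j * ν j + (if j = j0 then t * ν j0 else 0)) :=
              Finset.sum_congr rfl fun j _ => hterm j
          _ = (∑ j, vsc j * ν j) + ∑ j, (if j = j0 then t * ν j0 else 0) :=
              Finset.sum_add_distrib
          _ = _ := by rw [Finset.sum_ite_eq' Finset.univ j0, if_pos (Finset.mem_univ j0)]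
      rw [hsum, hlin] at hmin
      nlinarith [hmin]
  -- positivity of μsc
  have hμscpos : ∀ i, 0 < μsc i := by
    intro i
    rw [hμsc]
    have : Nonempty (Fin m) := Fin.pos_iff_nonempty.mp hm
    exact Finset.sum_pos (fun j _ =>
      mul_pos (mul_pos (Real.exp_pos _) (hKpos i j)) (Real.exp_pos _)) Finset.univ_nonempty
  -- per-term bounds for i ∉ I
  have hbound : ∀ i ∉ I, μsc i ≤
      (J.card : ℝ) * νmaxJ / ((n : ℝ) * κ * Kmin) + ((m : ℝ) - J.card) * ε ^ 2 := by
    intro i hi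
    have heu : Real.exp (usc i) = ε / κ := by rw [husc_out i hi, Real.exp_log hεκ]
    have htermJ : ∀ j ∈ J, Real.exp (usc i) * K i j * Real.exp (vsc j)
        ≤ νmaxJ / ((n : ℝ) * κ * Kmin) := by
      intro j hj
      have hS := hcol j hj
      have hlowS : (n : ℝ) * (ε / κ * Kmin * Real.exp (vsc j))
          ≤ ∑ i', Real.exp (usc i') * K i' j * Real.exp (vsc j) := by
        calc (n : ℝ) * (ε / κ * Kmin * Real.exp (vsc j))
            = ∑ _i' : Fin n, ε / κ * Kmin * Real.exp (vsc j) := by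
              rw [Finset.sum_const, Finset.card_univ, Fintype.card_fin, nsmul_eq_mul]
          _ ≤ _ := Finset.sum_le_sum fun i' _ => by
              have h1 := husc_feas i'
              have h2 := hKmin_le i' j
              have h3 : ε / κ * Kmin ≤ Real.exp (usc i') * K i' j :=
                mul_le_mul h1 h2 hKminpos.le (Real.exp_pos _).le
              exact mul_le_mul_of_nonneg_right h3 (Real.exp_pos _).le
      rw [hS] at hlowS
      have hev : Real.exp (vsc j) ≤ ν j / ((n : ℝ) * ε * Kmin) := by
        rw [le_div_iff₀ (by positivity)]
        have h2 : κ * ((n : ℝ) * (ε / κ * Kmin * Real.exp (vsc j))) ≤ κ * (1 / κ * ν j) :=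
          mul_le_mul_of_nonneg_left hlowS hκ.le
        have h3 : κ * (1 / κ * ν j) = ν j := by field_simp
        have h4 : κ * ((n : ℝ) * (ε / κ * Kmin * Real.exp (vsc j)))
            = Real.exp (vsc j) * ((n : ℝ) * ε * Kmin) := by field_simp
        rw [h3, h4] at h2
        exact h2
      have h1 : Real.exp (usc i) * K i j * Real.exp (vsc j) ≤ ε / κ * Real.exp (vsc j) := by
        rw [heu]
        have h0 := mul_le_mul_of_nonneg_right
          (mul_le_mul_of_nonneg_left (hK1 i j) hεκ.le) (Real.exp_pos (vsc j)).le
        linarith [h0]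
      have h2 : ε / κ * Real.exp (vsc j) ≤ ε / κ * (ν j / ((n : ℝ) * ε * Kmin)) :=
        mul_le_mul_of_nonneg_left hev hεκ.le
      have h3 : ε / κ * (ν j / ((n : ℝ) * ε * Kmin)) = ν j / ((n : ℝ) * κ * Kmin) := by
        field_simp
      have h4 : ν j / ((n : ℝ) * κ * Kmin) ≤ νmaxJ / ((n : ℝ) * κ * Kmin) := by
        gcongr
        exact hνmaxJ.2 j hj
      linarith
    have htermJc : ∀ j ∈ Jᶜ, Real.exp (usc i) * K i j * Real.exp (vsc j) ≤ ε ^ 2 := by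
      intro j hj
      rw [Finset.mem_compl] at hj
      have hev : Real.exp (vsc j) = ε * κ := by rw [hvsc_out j hj, Real.exp_log hεκ']
      have : Real.exp (usc i) * K i j * Real.exp (vsc j) = ε ^ 2 * K i j := by
        rw [heu, hev]; field_simp
      rw [this]
      nlinarith [hK1 i j, hε]
    have hsplit : μsc i = (∑ j ∈ J, Real.exp (usc i) * K i j * Real.exp (vsc j))
        + ∑ j ∈ Jᶜ, Real.exp (usc i) * K i j * Real.exp (vsc j) := by
      rw [hμsc, ← Finset.sum_add_sum_compl J]
    have hJcard : ((Jᶜ : Finset (Fin m)).card : ℝ) = (m : ℝ) - J.card := by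
      rw [Finset.card_compl, Fintype.card_fin,
        Nat.cast_sub (by simpa using Finset.card_le_univ J)]
    have hb1 : (∑ j ∈ J, Real.exp (usc i) * K i j * Real.exp (vsc j))
        ≤ (J.card : ℝ) * (νmaxJ / ((n : ℝ) * κ * Kmin)) := by
      calc (∑ j ∈ J, Real.exp (usc i) * K i j * Real.exp (vsc j))
          ≤ ∑ _j ∈ J, νmaxJ / ((n : ℝ) * κ * Kmin) := Finset.sum_le_sum htermJ
        _ = _ := by rw [Finset.sum_const, nsmul_eq_mul]
    have hb2 : (∑ j ∈ Jᶜ, Real.exp (usc i) * K i j * Real.exp (vsc j))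
        ≤ ((m : ℝ) - J.card) * ε ^ 2 := by
      calc (∑ j ∈ Jᶜ, Real.exp (usc i) * K i j * Real.exp (vsc j))
          ≤ ∑ _j ∈ Jᶜ, ε ^ 2 := Finset.sum_le_sum htermJc
        _ = ((Jᶜ : Finset (Fin m)).card : ℝ) * ε ^ 2 := by
            rw [Finset.sum_const, nsmul_eq_mul]
        _ = _ := by rw [hJcard]
    rw [hsplit, mul_div_assoc]
    linarith
  -- assemble
  have habs : (∑ i, |μsc i|) = ∑ i, μsc i :=
    Finset.sum_congr rfl fun i _ => abs_of_pos (hμscpos i)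
  rw [habs, ← Finset.sum_add_sum_compl I]
  have hIcard : ((Iᶜ : Finset (Fin n)).card : ℝ) = (n : ℝ) - I.card := by
    rw [Finset.card_compl, Fintype.card_fin,
      Nat.cast_sub (by simpa using Finset.card_le_univ I)]
  have hA : (∑ i ∈ I, μsc i) = κ * ∑ i ∈ I, μ i := by
    rw [Finset.mul_sum]
    exact Finset.sum_congr rfl fun i hi => hrow i hi
  have hB : (∑ i ∈ Iᶜ, μsc i)
      ≤ ((n : ℝ) - I.card) *
        ((J.card : ℝ) * νmaxJ / ((n : ℝ) * κ * Kmin) + ((m : ℝ) - J.card) * ε ^ 2) := by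
    calc (∑ i ∈ Iᶜ, μsc i)
        ≤ ∑ _i ∈ Iᶜ, ((J.card : ℝ) * νmaxJ / ((n : ℝ) * κ * Kmin)
          + ((m : ℝ) - J.card) * ε ^ 2) :=
          Finset.sum_le_sum fun i hi => hbound i (Finset.mem_compl.mp hi)
      _ = ((Iᶜ : Finset (Fin n)).card : ℝ) * _ := by rw [Finset.sum_const, nsmul_eq_mul]
      _ = _ := by rw [hIcard]
  linarith
end

section
/- Explicit objective-gap bound (Proposition 3, explicit form): Let (u*, v*) be a global minimizer of Ψ over ℝ^n × ℝ^m, let c_{μν} = min( min_{i∈I} μ_i , min_{j∈J} ν_j ), set A = ‖C‖_∞/η + log( max(n, m)/c_{μν}² ), and assume ‖u*‖_∞ ≤ A, ‖v*‖_∞ ≤ A, and max(n, m)·ε² ≥ c_{μν}. Then Ψ_κ(u^sc, v^sc) − Ψ(u*, v*) ≤ 2·( A + ‖u^sc‖_∞ + ‖v^sc‖_∞ + log( max(n, m)·ε²/c_{μν} ) )·( ‖μ^sc − μ‖₁ + ‖ν^sc − ν‖₁ ) + |1 − κ|·( ‖u^sc‖_∞·‖μ^sc‖₁ + ‖μ^sc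 − μ‖₁ ) + |1 − 1/κ|·( ‖v^sc‖_∞·‖ν^sc‖₁ + ‖ν^sc − ν‖₁ ), where ‖C‖_∞ is the maximum entry of C in absolute value, ‖·‖_∞ the sup norm on vectors, and ‖·‖₁ the ℓ1 norm. -/
open scoped Classical

lemma aux_one_dim (ρ b t : ℝ) (hρ : 0 < ρ) (hb : 0 < b)
    (hmin : ∀ x, t ≤ x → ρ * Real.exp t - b * t ≤ ρ * Real.exp x - b * x) :
    b ≤ ρ * Real.exp t := by
  by_contra hcon
  push_neg at hcon
  have hbρ : 0 < b / ρ := div_pos hb hρ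
  set x := Real.log (b / ρ) with hxdef
  have hex : Real.exp x = b / ρ := Real.exp_log hbρ
  have h4 : ρ * Real.exp x = b := by rw [hex]; field_simp
  have htx : t < x := by
    have h1 : Real.exp t < Real.exp x := by
      nlinarith [Real.exp_pos t]
    exact Real.exp_lt_exp.mp h1
  have h2 := hmin x htx.le
  have he : Real.exp t = Real.exp x * Real.exp (t - x) := by
    rw [← Real.exp_add]; ring_nf
  have h3 : (t - x) + 1 < Real.exp (t - x) :=
    Real.add_one_lt_exp (by intro h; rw [sub_eq_zero] at h; exact absurd h (ne_of_lt htx))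
  nlinarith [h2, h3, he, h4, hb]

set_option maxHeartbeats 2000000 in
theorem explicit_objective_gap_bound
    (n m : ℕ) (hn : 0 < n) (hm : 0 < m)
    (C : Fin n → Fin m → ℝ) (hC : ∀ i j, 0 ≤ C i j)
    (η : ℝ) (hη : 0 < η)
    (K : Fin n → Fin m → ℝ) (hK : ∀ i j, K i j = Real.exp (-(C i j) / η))
    (μ : Fin n → ℝ) (ν : Fin m → ℝ)
    (hμpos : ∀ i, 0 < μ i) (hνpos : ∀ j, 0 < ν j)
    (hμsum : ∑ i, μ i = 1) (hνsum : ∑ j, ν j = 1)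
    (ε κ : ℝ) (hε : 0 < ε) (hκ : 0 < κ)
    (I : Finset (Fin n)) (hI : ∀ i, i ∈ I ↔ ε ^ 2 / κ * (∑ j, K i j) ≤ μ i)
    (J : Finset (Fin m)) (hJ : ∀ j, j ∈ J ↔ κ * ε ^ 2 * (∑ i, K i j) ≤ ν j)
    (hIne : I.Nonempty) (hJne : J.Nonempty)
    (Kmin : ℝ) (hKmin_le : ∀ i j, Kmin ≤ K i j) (hKmin_mem : ∃ i j, K i j = Kmin)
    (usc : Fin n → ℝ) (vsc : Fin m → ℝ)
    (husc_feas : ∀ i, ε / κ ≤ Real.exp (usc i))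
    (hvsc_feas : ∀ j, ε * κ ≤ Real.exp (vsc j))
    (husc_out : ∀ i ∉ I, usc i = Real.log (ε / κ))
    (hvsc_out : ∀ j ∉ J, vsc j = Real.log (ε * κ))
    (hsc_min : ∀ (u : Fin n → ℝ) (v : Fin m → ℝ),
      (∀ i, ε / κ ≤ Real.exp (u i)) → (∀ j, ε * κ ≤ Real.exp (v j)) →
      (∀ i ∉ I, u i = Real.log (ε / κ)) → (∀ j ∉ J, v j = Real.log (ε * κ)) →
      (∑ i, ∑ j, Real.exp (usc i) * K i j * Real.exp (vsc j))
          - κ * (∑ i, usc i * μ i) - (1 / κ) * (∑ j, vsc j * ν j)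
        ≤ (∑ i, ∑ j, Real.exp (u i) * K i j * Real.exp (v j))
          - κ * (∑ i, u i * μ i) - (1 / κ) * (∑ j, v j * ν j))
    (hactive_u : ∀ i ∈ I, ε / κ < Real.exp (usc i))
    (hactive_v : ∀ j ∈ J, ε * κ < Real.exp (vsc j))
    (μsc : Fin n → ℝ)
    (hμsc : ∀ i, μsc i = ∑ j, Real.exp (usc i) * K i j * Real.exp (vsc j))
    (νsc : Fin m → ℝ)
    (hνsc : ∀ j, νsc j = ∑ i, Real.exp (usc i) * K i j * Real.exp (vsc j))
    (ustar : Fin n → ℝ) (vstar : Fin m → ℝ)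
    (hstar_min : ∀ (u : Fin n → ℝ) (v : Fin m → ℝ),
      (∑ i, ∑ j, Real.exp (ustar i) * K i j * Real.exp (vstar j))
          - (∑ i, ustar i * μ i) - (∑ j, vstar j * ν j)
        ≤ (∑ i, ∑ j, Real.exp (u i) * K i j * Real.exp (v j))
          - (∑ i, u i * μ i) - (∑ j, v j * ν j))
    (μminI νminJ : ℝ)
    (hμminI : (∃ i ∈ I, μ i = μminI) ∧ ∀ i ∈ I, μminI ≤ μ i)
    (hνminJ : (∃ j ∈ J, ν j = νminJ) ∧ ∀ j ∈ J, νminJ ≤ ν j)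
    (Cmax : ℝ) (hCmax_ub : ∀ i j, |C i j| ≤ Cmax) (hCmax_mem : ∃ i j, |C i j| = Cmax)
    (A : ℝ) (hA : A = Cmax / η + Real.log ((max n m : ℝ) / (min μminI νminJ) ^ 2))
    (hustarA : ‖ustar‖ ≤ A) (hvstarA : ‖vstar‖ ≤ A)
    (hcεbound : min μminI νminJ ≤ (max n m : ℝ) * ε ^ 2) :
    ((∑ i, ∑ j, Real.exp (usc i) * K i j * Real.exp (vsc j))
        - κ * (∑ i, usc i * μ i) - (1 / κ) * (∑ j, vsc j * ν j))
      - ((∑ i, ∑ j, Real.exp (ustar i) * K i j * Real.exp (vstar j))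
        - (∑ i, ustar i * μ i) - (∑ j, vstar j * ν j))
    ≤ 2 * (A + ‖usc‖ + ‖vsc‖ + Real.log ((max n m : ℝ) * ε ^ 2 / min μminI νminJ)) *
        ((∑ i, |μsc i - μ i|) + (∑ j, |νsc j - ν j|))
      + |1 - κ| * (‖usc‖ * (∑ i, |μsc i|) + (∑ i, |μsc i - μ i|))
      + |1 - 1 / κ| * (‖vsc‖ * (∑ j, |νsc j|) + (∑ j, |νsc j - ν j|)) := by
  classical
  have hKpos : ∀ i j, 0 < K i j := fun i j => by rw [hK i j]; exact Real.exp_pos _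
  set ρ : Fin n → ℝ := fun i => ∑ j, K i j * Real.exp (vsc j) with hρdef
  set σ : Fin m → ℝ := fun j => ∑ i, Real.exp (usc i) * K i j with hσdef
  have hρpos : ∀ i, 0 < ρ i := fun i =>
    Finset.sum_pos (fun j _ => mul_pos (hKpos i j) (Real.exp_pos _))
      ⟨⟨0, hm⟩, Finset.mem_univ _⟩
  have hσpos : ∀ j, 0 < σ j := fun j =>
    Finset.sum_pos (fun i _ => mul_pos (Real.exp_pos _) (hKpos i j))
      ⟨⟨0, hn⟩, Finset.mem_univ _⟩
  have hμsc' : ∀ i, μsc i = Real.exp (usc i) * ρ i := by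
    intro i
    rw [hμsc i, hρdef, Finset.mul_sum]
    exact Finset.sum_congr rfl fun j _ => by ring
  have hνsc' : ∀ j, νsc j = Real.exp (vsc j) * σ j := by
    intro j
    rw [hνsc j, hσdef, Finset.mul_sum]
    exact Finset.sum_congr rfl fun i _ => by ring
  have hμscpos : ∀ i, 0 < μsc i := fun i => by
    rw [hμsc' i]; exact mul_pos (Real.exp_pos _) (hρpos i)
  have hνscpos : ∀ j, 0 < νsc j := fun j => by
    rw [hνsc' j]; exact mul_pos (Real.exp_pos _) (hσpos j)
  -- rewriting of double sums
  have ea : ∀ w : Fin n → ℝ,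
      (∑ i, ∑ j, Real.exp (w i) * K i j * Real.exp (vsc j)) = ∑ i, Real.exp (w i) * ρ i := by
    intro w
    refine Finset.sum_congr rfl fun i _ => ?_
    rw [hρdef, Finset.mul_sum]
    exact Finset.sum_congr rfl fun j _ => by ring
  have eb : ∀ w : Fin m → ℝ,
      (∑ i, ∑ j, Real.exp (usc i) * K i j * Real.exp (w j)) = ∑ j, Real.exp (w j) * σ j := by
    intro w
    rw [Finset.sum_comm]
    refine Finset.sum_congr rfl fun j _ => ?_
    rw [hσdef, Finset.mul_sum]
    exact Finset.sum_congr rfl fun i _ => by ring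
  -- stationarity lower bound on I
  have hstatI : ∀ i, κ * μ i ≤ μsc i := by
    intro i
    by_cases hi : i ∈ I
    · have key : κ * μ i ≤ ρ i * Real.exp (usc i) := by
        refine aux_one_dim (ρ i) (κ * μ i) (usc i) (hρpos i) (mul_pos hκ (hμpos i)) ?_
        intro x hx
        have hf1 : ∀ i', ε / κ ≤ Real.exp (Function.update usc i x i') := by
          intro i'
          by_cases h : i' = i
          · subst h
            rw [Function.update_self]
            exact le_trans (husc_feas i') (Real.exp_le_exp.mpr hx)
          · rw [Function.update_of_ne h]; exact husc_feas i'
        have hf3 : ∀ i' ∉ I, Function.update usc i x i' = Real.log (ε / κ) := by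
          intro i' h
          rw [Function.update_of_ne (by rintro rfl; exact h hi)]
          exact husc_out i' h
        have H := hsc_min (Function.update usc i x) vsc hf1 hvsc_feas hf3 hvsc_out
        rw [ea (Function.update usc i x), ea usc] at H
        have s1 : (∑ i', Real.exp (Function.update usc i x i') * ρ i')
            = Real.exp x * ρ i + ∑ i' ∈ Finset.univ.erase i, Real.exp (usc i') * ρ i' := by
          rw [← Finset.add_sum_erase _ (fun i' => Real.exp (Function.update usc i x i') * ρ i')
            (Finset.mem_univ i)]
          congr 1
          · rw [Function.update_self]
          · exact Finset.sum_congr rfl fun i' hi' => by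
              rw [Function.update_of_ne (Finset.ne_of_mem_erase hi')]
        have s2 : (∑ i', Real.exp (usc i') * ρ i')
            = Real.exp (usc i) * ρ i + ∑ i' ∈ Finset.univ.erase i, Real.exp (usc i') * ρ i' :=
          (Finset.add_sum_erase _ _ (Finset.mem_univ i)).symm
        have s3 : (∑ i', Function.update usc i x i' * μ i')
            = x * μ i + ∑ i' ∈ Finset.univ.erase i, usc i' * μ i' := by
          rw [← Finset.add_sum_erase _ (fun i' => Function.update usc i x i' * μ i')
            (Finset.mem_univ i)]
          congr 1
          · rw [Function.update_self]
          · exact Finset.sum_congr rfl fun i' hi' => by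
              rw [Function.update_of_ne (Finset.ne_of_mem_erase hi')]
        have s4 : (∑ i', usc i' * μ i')
            = usc i * μ i + ∑ i' ∈ Finset.univ.erase i, usc i' * μ i' :=
          (Finset.add_sum_erase _ _ (Finset.mem_univ i)).symm
        rw [s1, s2, s3, s4] at H
        nlinarith [H]
      rw [hμsc' i]; linarith [key, mul_comm (ρ i) (Real.exp (usc i))]
    · have hi2 : μ i < ε ^ 2 / κ * (∑ j, K i j) := lt_of_not_ge fun h => hi ((hI i).mpr h)
      have hKsum : 0 < ∑ j, K i j :=
        Finset.sum_pos (fun j _ => hKpos i j) ⟨⟨0, hm⟩, Finset.mem_univ _⟩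
      have hρlb : ε * κ * (∑ j, K i j) ≤ ρ i := by
        rw [hρdef, Finset.mul_sum]
        refine Finset.sum_le_sum fun j _ => ?_
        have := hvsc_feas j
        calc ε * κ * K i j = K i j * (ε * κ) := by ring
          _ ≤ K i j * Real.exp (vsc j) :=
            mul_le_mul_of_nonneg_left (hvsc_feas j) (hKpos i j).le
      have husc_lb : ε / κ ≤ Real.exp (usc i) := husc_feas i
      have hmul : (ε / κ) * (ε * κ * (∑ j, K i j)) ≤ Real.exp (usc i) * ρ i := by
        refine mul_le_mul husc_lb hρlb (by positivity) (Real.exp_pos _).le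
      rw [hμsc' i]
      have hsimp : (ε / κ) * (ε * κ * (∑ j, K i j)) = ε ^ 2 * (∑ j, K i j) := by
        field_simp
      have h6 : κ * (ε ^ 2 / κ * (∑ j, K i j)) = ε ^ 2 * (∑ j, K i j) := by
        field_simp
      have h7 := mul_lt_mul_of_pos_left hi2 hκ
      linarith [hmul, hsimp, h6, h7]
  -- stationarity lower bound on J
  have hstatJ : ∀ j, ν j ≤ κ * νsc j := by
    intro j
    by_cases hj : j ∈ J
    · have key : (1 / κ) * ν j ≤ σ j * Real.exp (vsc j) := by
        refine aux_one_dim (σ j) ((1 / κ) * ν j) (vsc j) (hσpos j)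
          (mul_pos (by positivity) (hνpos j)) ?_
        intro x hx
        have hf2 : ∀ j', ε * κ ≤ Real.exp (Function.update vsc j x j') := by
          intro j'
          by_cases h : j' = j
          · subst h
            rw [Function.update_self]
            exact le_trans (hvsc_feas j') (Real.exp_le_exp.mpr hx)
          · rw [Function.update_of_ne h]; exact hvsc_feas j'
        have hf4 : ∀ j' ∉ J, Function.update vsc j x j' = Real.log (ε * κ) := by
          intro j' h
          rw [Function.update_of_ne (by rintro rfl; exact h hj)]
          exact hvsc_out j' h
        have H := hsc_min usc (Function.update vsc j x) husc_feas hf2 husc_out hf4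
        rw [eb (Function.update vsc j x), eb vsc] at H
        have s1 : (∑ j', Real.exp (Function.update vsc j x j') * σ j')
            = Real.exp x * σ j + ∑ j' ∈ Finset.univ.erase j, Real.exp (vsc j') * σ j' := by
          rw [← Finset.add_sum_erase _ (fun j' => Real.exp (Function.update vsc j x j') * σ j')
            (Finset.mem_univ j)]
          congr 1
          · rw [Function.update_self]
          · exact Finset.sum_congr rfl fun j' hj' => by
              rw [Function.update_of_ne (Finset.ne_of_mem_erase hj')]
        have s2 : (∑ j', Real.exp (vsc j') * σ j')
            = Real.exp (vsc j) * σ j + ∑ j' ∈ Finset.univ.erase j, Real.exp (vsc j') * σ j' :=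
          (Finset.add_sum_erase _ _ (Finset.mem_univ j)).symm
        have s3 : (∑ j', Function.update vsc j x j' * ν j')
            = x * ν j + ∑ j' ∈ Finset.univ.erase j, vsc j' * ν j' := by
          rw [← Finset.add_sum_erase _ (fun j' => Function.update vsc j x j' * ν j')
            (Finset.mem_univ j)]
          congr 1
          · rw [Function.update_self]
          · exact Finset.sum_congr rfl fun j' hj' => by
              rw [Function.update_of_ne (Finset.ne_of_mem_erase hj')]
        have s4 : (∑ j', vsc j' * ν j')
            = vsc j * ν j + ∑ j' ∈ Finset.univ.erase j, vsc j' * ν j' :=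
          (Finset.add_sum_erase _ _ (Finset.mem_univ j)).symm
        rw [s1, s2, s3, s4] at H
        nlinarith [H]
      rw [hνsc' j]
      have : κ * ((1 / κ) * ν j) ≤ κ * (σ j * Real.exp (vsc j)) :=
        mul_le_mul_of_nonneg_left key hκ.le
      have hκν : κ * ((1 / κ) * ν j) = ν j := by field_simp
      linarith [mul_comm (σ j) (Real.exp (vsc j))]
    · have hj2 : ν j < κ * ε ^ 2 * (∑ i, K i j) := lt_of_not_ge fun h => hj ((hJ j).mpr h)
      have hKsum : 0 < ∑ i, K i j :=
        Finset.sum_pos (fun i _ => hKpos i j) ⟨⟨0, hn⟩, Finset.mem_univ _⟩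
      have hσlb : ε / κ * (∑ i, K i j) ≤ σ j := by
        rw [hσdef, Finset.mul_sum]
        refine Finset.sum_le_sum fun i _ => ?_
        calc ε / κ * K i j = K i j * (ε / κ) := by ring
          _ ≤ K i j * Real.exp (usc i) :=
            mul_le_mul_of_nonneg_left (husc_feas i) (hKpos i j).le
          _ = Real.exp (usc i) * K i j := by ring
      have hmul : (ε * κ) * (ε / κ * (∑ i, K i j)) ≤ Real.exp (vsc j) * σ j := by
        refine mul_le_mul (hvsc_feas j) hσlb (by positivity) (Real.exp_pos _).le
      rw [hνsc' j]
      have hsimp : κ * ((ε * κ) * (ε / κ * (∑ i, K i j))) = κ * ε ^ 2 * (∑ i, K i j) := by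
        field_simp
      nlinarith [hmul, hj2, hKsum, mul_le_mul_of_nonneg_left hmul hκ.le]
  -- norm bounds
  have hUb : ∀ i, |usc i| ≤ ‖usc‖ := fun i => by
    have := norm_le_pi_norm usc i; rwa [Real.norm_eq_abs] at this
  have hVb : ∀ j, |vsc j| ≤ ‖vsc‖ := fun j => by
    have := norm_le_pi_norm vsc j; rwa [Real.norm_eq_abs] at this
  have hAu : ∀ i, |ustar i| ≤ A := fun i => by
    have := norm_le_pi_norm ustar i; rw [Real.norm_eq_abs] at this; linarith
  have hAv : ∀ j, |vstar j| ≤ A := fun j => by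
    have := norm_le_pi_norm vstar j; rw [Real.norm_eq_abs] at this; linarith
  have hU0 : 0 ≤ ‖usc‖ := norm_nonneg _
  have hV0 : 0 ≤ ‖vsc‖ := norm_nonneg _
  -- aggregate quantities
  set S : ℝ := ∑ i, ∑ j, Real.exp (usc i) * K i j * Real.exp (vsc j) with hSdef
  have hSμ : ∑ i, μsc i = S := Finset.sum_congr rfl fun i _ => hμsc i
  have hSν : ∑ j, νsc j = S := by
    rw [hSdef, Finset.sum_comm]
    exact Finset.sum_congr rfl fun j _ => hνsc j
  have hS0 : 0 ≤ S := by
    rw [← hSμ]; exact Finset.sum_nonneg fun i _ => (hμscpos i).le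
  set Δμ : ℝ := ∑ i, |μsc i - μ i| with hΔμdef
  set Δν : ℝ := ∑ j, |νsc j - ν j| with hΔνdef
  have hΔμ0 : 0 ≤ Δμ := Finset.sum_nonneg fun i _ => abs_nonneg _
  have hΔν0 : 0 ≤ Δν := Finset.sum_nonneg fun j _ => abs_nonneg _
  have h1Sμ : 1 ≤ S + Δμ := by
    rw [← hμsum, ← hSμ, hΔμdef, ← Finset.sum_add_distrib]
    refine Finset.sum_le_sum fun i _ => ?_
    have := neg_abs_le (μsc i - μ i)
    linarith
  have h1Sν : 1 ≤ S + Δν := by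
    rw [← hνsum, ← hSν, hΔνdef, ← Finset.sum_add_distrib]
    refine Finset.sum_le_sum fun j _ => ?_
    have := neg_abs_le (νsc j - ν j)
    linarith
  have habsμ : ∑ i, |μsc i| = S := by
    rw [← hSμ]; exact Finset.sum_congr rfl fun i _ => abs_of_pos (hμscpos i)
  have habsν : ∑ j, |νsc j| = S := by
    rw [← hSν]; exact Finset.sum_congr rfl fun j _ => abs_of_pos (hνscpos j)
  -- nonnegativity of A and L
  have hcpos : 0 < min μminI νminJ := by
    obtain ⟨⟨i0, _, hi0⟩, _⟩ := hμminI
    obtain ⟨⟨j0, _, hj0⟩, _⟩ := hνminJ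
    exact lt_min (hi0 ▸ hμpos i0) (hj0 ▸ hνpos j0)
  have hc1 : min μminI νminJ ≤ 1 := by
    obtain ⟨⟨i0, _, hi0⟩, _⟩ := hμminI
    have : μ i0 ≤ ∑ i, μ i :=
      Finset.single_le_sum (fun i _ => (hμpos i).le) (Finset.mem_univ i0)
    calc min μminI νminJ ≤ μminI := min_le_left _ _
      _ = μ i0 := hi0.symm
      _ ≤ 1 := by rw [← hμsum]; exact this
  have hmax1 : (1 : ℝ) ≤ (max n m : ℝ) := by
    calc (1:ℝ) ≤ (n : ℝ) := by exact_mod_cast hn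
      _ ≤ _ := le_max_left _ _
  have hL0 : 0 ≤ Real.log ((max n m : ℝ) * ε ^ 2 / min μminI νminJ) := by
    refine Real.log_nonneg ((one_le_div hcpos).mpr hcεbound)
  have hA0 : 0 ≤ A := by
    rw [hA]
    have hC0 : 0 ≤ Cmax := le_trans (abs_nonneg _) (hCmax_ub ⟨0, hn⟩ ⟨0, hm⟩)
    have hsq : (min μminI νminJ) ^ 2 ≤ 1 := pow_le_one₀ hcpos.le hc1
    have hlog : 0 ≤ Real.log ((max n m : ℝ) / (min μminI νminJ) ^ 2) := by
      refine Real.log_nonneg ((one_le_div (by positivity)).mpr ?_)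
      linarith
    have hdiv : 0 ≤ Cmax / η := div_nonneg hC0 hη.le
    linarith
  -- convexity gradient inequality
  have hpt : ∀ i j, Real.exp (usc i) * K i j * Real.exp (vsc j)
      * (1 + (ustar i - usc i) + (vstar j - vsc j))
      ≤ Real.exp (ustar i) * K i j * Real.exp (vstar j) := by
    intro i j
    set d := (ustar i - usc i) + (vstar j - vsc j) with hd
    have h1 : d + 1 ≤ Real.exp d := Real.add_one_le_exp d
    have hKE : 0 < K i j * Real.exp (usc i + vsc j) := mul_pos (hKpos i j) (Real.exp_pos _)
    have e2 : Real.exp (usc i) * K i j * Real.exp (vsc j)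
        * (1 + (ustar i - usc i) + (vstar j - vsc j))
        = K i j * Real.exp (usc i + vsc j) * (d + 1) := by
      rw [Real.exp_add, hd]; ring
    have e3 : Real.exp (ustar i) * K i j * Real.exp (vstar j)
        = K i j * Real.exp (usc i + vsc j) * Real.exp d := by
      have h5 : usc i + vsc j + d = ustar i + vstar j := by rw [hd]; ring
      calc Real.exp (ustar i) * K i j * Real.exp (vstar j)
          = K i j * Real.exp (ustar i + vstar j) := by rw [Real.exp_add]; ring
        _ = K i j * Real.exp (usc i + vsc j + d) := by rw [h5]
        _ = K i j * Real.exp (usc i + vsc j) * Real.exp d := by rw [Real.exp_add]; ring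
    rw [e2, e3]
    exact mul_le_mul_of_nonneg_left h1 hKE.le
  have hsum : (∑ i, ∑ j, Real.exp (usc i) * K i j * Real.exp (vsc j)
      * (1 + (ustar i - usc i) + (vstar j - vsc j)))
      ≤ ∑ i, ∑ j, Real.exp (ustar i) * K i j * Real.exp (vstar j) :=
    Finset.sum_le_sum fun i _ => Finset.sum_le_sum fun j _ => hpt i j
  have hexp : (∑ i, ∑ j, Real.exp (usc i) * K i j * Real.exp (vsc j)
      * (1 + (ustar i - usc i) + (vstar j - vsc j)))
      = S + (∑ i, μsc i * (ustar i - usc i)) + (∑ j, νsc j * (vstar j - vsc j)) := by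
    have inner : ∀ i, (∑ j, Real.exp (usc i) * K i j * Real.exp (vsc j)
        * (1 + (ustar i - usc i) + (vstar j - vsc j)))
        = μsc i + μsc i * (ustar i - usc i)
          + (∑ j, Real.exp (usc i) * K i j * Real.exp (vsc j) * (vstar j - vsc j)) := by
      intro i
      have h7 : ∀ j, Real.exp (usc i) * K i j * Real.exp (vsc j)
          * (1 + (ustar i - usc i) + (vstar j - vsc j))
          = Real.exp (usc i) * K i j * Real.exp (vsc j)
            + Real.exp (usc i) * K i j * Real.exp (vsc j) * (ustar i - usc i)
            + Real.exp (usc i) * K i j * Real.exp (vsc j) * (vstar j - vsc j) :=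
        fun j => by ring
      rw [Finset.sum_congr rfl fun j _ => h7 j, Finset.sum_add_distrib,
        Finset.sum_add_distrib, ← Finset.sum_mul, ← hμsc i]
    rw [Finset.sum_congr rfl fun i _ => inner i, Finset.sum_add_distrib,
      Finset.sum_add_distrib, hSμ]
    congr 1
    rw [Finset.sum_comm]
    refine Finset.sum_congr rfl fun j _ => ?_
    rw [← Finset.sum_mul, ← hνsc j]
  have hkey : S + (∑ i, μsc i * (ustar i - usc i)) + (∑ j, νsc j * (vstar j - vsc j))
      ≤ ∑ i, ∑ j, Real.exp (ustar i) * K i j * Real.exp (vstar j) := by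
    rw [← hexp]; exact hsum
  have idu : (∑ i, μsc i * (ustar i - usc i))
      = -(∑ i, (usc i - ustar i) * (μsc i - μ i)) + ((∑ i, ustar i * μ i)
        - (∑ i, usc i * μ i)) := by
    have h8 : ∀ i, μsc i * (ustar i - usc i)
        = -((usc i - ustar i) * (μsc i - μ i)) + (ustar i * μ i - usc i * μ i) :=
      fun i => by ring
    rw [Finset.sum_congr rfl fun i _ => h8 i, Finset.sum_add_distrib,
      Finset.sum_sub_distrib, Finset.sum_neg_distrib]
  have idv : (∑ j, νsc j * (vstar j - vsc j))
      = -(∑ j, (vsc j - vstar j) * (νsc j - ν j)) + ((∑ j, vstar j * ν j)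
        - (∑ j, vsc j * ν j)) := by
    have h8 : ∀ j, νsc j * (vstar j - vsc j)
        = -((vsc j - vstar j) * (νsc j - ν j)) + (vstar j * ν j - vsc j * ν j) :=
      fun j => by ring
    rw [Finset.sum_congr rfl fun j _ => h8 j, Finset.sum_add_distrib,
      Finset.sum_sub_distrib, Finset.sum_neg_distrib]
  have bndu : (∑ i, (usc i - ustar i) * (μsc i - μ i)) ≤ (‖usc‖ + A) * Δμ := by
    rw [hΔμdef, Finset.mul_sum]
    refine Finset.sum_le_sum fun i _ => ?_
    calc (usc i - ustar i) * (μsc i - μ i) ≤ |(usc i - ustar i) * (μsc i - μ i)| :=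
          le_abs_self _
      _ = |usc i - ustar i| * |μsc i - μ i| := abs_mul _ _
      _ ≤ (‖usc‖ + A) * |μsc i - μ i| := by
          refine mul_le_mul_of_nonneg_right ?_ (abs_nonneg _)
          calc |usc i - ustar i| = |usc i + -(ustar i)| := by rw [sub_eq_add_neg]
            _ ≤ |usc i| + |-(ustar i)| := abs_add_le _ _
            _ = |usc i| + |ustar i| := by rw [abs_neg]
            _ ≤ ‖usc‖ + A := add_le_add (hUb i) (hAu i)
  have bndv : (∑ j, (vsc j - vstar j) * (νsc j - ν j)) ≤ (‖vsc‖ + A) * Δν := by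
    rw [hΔνdef, Finset.mul_sum]
    refine Finset.sum_le_sum fun j _ => ?_
    calc (vsc j - vstar j) * (νsc j - ν j) ≤ |(vsc j - vstar j) * (νsc j - ν j)| :=
          le_abs_self _
      _ = |vsc j - vstar j| * |νsc j - ν j| := abs_mul _ _
      _ ≤ (‖vsc‖ + A) * |νsc j - ν j| := by
          refine mul_le_mul_of_nonneg_right ?_ (abs_nonneg _)
          calc |vsc j - vstar j| = |vsc j + -(vstar j)| := by rw [sub_eq_add_neg]
            _ ≤ |vsc j| + |-(vstar j)| := abs_add_le _ _
            _ = |vsc j| + |vstar j| := by rw [abs_neg]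
            _ ≤ ‖vsc‖ + A := add_le_add (hVb j) (hAv j)
  have hgrad : (S - (∑ i, usc i * μ i) - (∑ j, vsc j * ν j))
      - ((∑ i, ∑ j, Real.exp (ustar i) * K i j * Real.exp (vstar j))
        - (∑ i, ustar i * μ i) - (∑ j, vstar j * ν j))
      ≤ (‖usc‖ + A) * Δμ + (‖vsc‖ + A) * Δν := by
    rw [idu, idv] at hkey
    linarith [hkey, bndu, bndv]
  -- bound on the kappa terms
  have habs1 : |1 - 1/κ| = |1 - κ| / κ := by
    have h9 : (1 : ℝ) - 1/κ = (κ - 1)/κ := by rw [sub_div, div_self hκ.ne']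
    rw [h9, abs_div, abs_of_pos hκ, abs_sub_comm]
  have hP2 : (1 - κ) * (∑ i, usc i * μ i) + (1 - 1/κ) * (∑ j, vsc j * ν j)
      ≤ |1 - κ| * (‖usc‖ * S) + |1 - 1/κ| * (‖vsc‖ * S) + ‖usc‖ * Δμ + ‖vsc‖ * Δν := by
    rcases le_or_gt 1 κ with hk1 | hk1
    · -- κ ≥ 1
      have hu1 : (1 - κ) * (∑ i, usc i * μ i) ≤ |1 - 1/κ| * ‖usc‖ * S := by
        rw [Finset.mul_sum]
        calc (∑ i, (1 - κ) * (usc i * μ i))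
            ≤ ∑ i, (|1 - 1/κ| * ‖usc‖) * μsc i := by
              refine Finset.sum_le_sum fun i _ => ?_
              calc (1 - κ) * (usc i * μ i) ≤ |(1 - κ) * (usc i * μ i)| := le_abs_self _
                _ = |1 - κ| * (|usc i| * μ i) := by
                    rw [abs_mul, abs_mul, abs_of_pos (hμpos i)]
                _ ≤ |1 - κ| * (‖usc‖ * μ i) :=
                    mul_le_mul_of_nonneg_left
                      (mul_le_mul_of_nonneg_right (hUb i) (hμpos i).le) (abs_nonneg _)
                _ ≤ |1 - κ| * (‖usc‖ * (μsc i / κ)) := by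
                    refine mul_le_mul_of_nonneg_left
                      (mul_le_mul_of_nonneg_left ?_ hU0) (abs_nonneg _)
                    rw [le_div_iff₀ hκ]
                    linarith [hstatI i, mul_comm (μ i) κ]
                _ = (|1 - 1/κ| * ‖usc‖) * μsc i := by rw [habs1]; ring
          _ = |1 - 1/κ| * ‖usc‖ * S := by rw [← Finset.mul_sum, hSμ]
      have hcmp : |1 - 1/κ| ≤ |1 - κ| := by
        rw [habs1]; exact div_le_self (abs_nonneg _) hk1
      have hu : (1 - κ) * (∑ i, usc i * μ i) ≤ |1 - κ| * (‖usc‖ * S) := by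
        calc (1 - κ) * (∑ i, usc i * μ i) ≤ |1 - 1/κ| * ‖usc‖ * S := hu1
          _ ≤ |1 - κ| * (‖usc‖ * S) := by
              rw [← mul_assoc]
              exact mul_le_mul_of_nonneg_right
                (mul_le_mul_of_nonneg_right hcmp hU0) hS0
      have hv1 : (1 - 1/κ) * (∑ j, vsc j * ν j) ≤ |1 - 1/κ| * ‖vsc‖ := by
        rw [Finset.mul_sum]
        calc (∑ j, (1 - 1/κ) * (vsc j * ν j))
            ≤ ∑ j, (|1 - 1/κ| * ‖vsc‖) * ν j := by
              refine Finset.sum_le_sum fun j _ => ?_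
              calc (1 - 1/κ) * (vsc j * ν j) ≤ |(1 - 1/κ) * (vsc j * ν j)| := le_abs_self _
                _ = |1 - 1/κ| * (|vsc j| * ν j) := by
                    rw [abs_mul, abs_mul, abs_of_pos (hνpos j)]
                _ ≤ (|1 - 1/κ| * ‖vsc‖) * ν j := by
                    rw [mul_assoc]
                    exact mul_le_mul_of_nonneg_left
                      (mul_le_mul_of_nonneg_right (hVb j) (hνpos j).le) (abs_nonneg _)
          _ = |1 - 1/κ| * ‖vsc‖ := by rw [← Finset.mul_sum, hνsum, mul_one]
      have habs2 : |1 - 1/κ| ≤ 1 := by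
        rw [abs_of_nonneg (by
          have : 1/κ ≤ 1 := (div_le_one hκ).mpr hk1
          linarith)]
        have : 0 < 1/κ := by positivity
        linarith
      have hv : (1 - 1/κ) * (∑ j, vsc j * ν j) ≤ |1 - 1/κ| * (‖vsc‖ * S) + ‖vsc‖ * Δν := by
        have step : |1 - 1/κ| * ‖vsc‖ ≤ |1 - 1/κ| * ‖vsc‖ * (S + Δν) := by
          have h10 := mul_le_mul_of_nonneg_left h1Sν
            (mul_nonneg (abs_nonneg (1 - 1/κ)) hV0)
          rwa [mul_one] at h10
        have step2 : |1 - 1/κ| * ‖vsc‖ * Δν ≤ ‖vsc‖ * Δν := by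
          refine mul_le_mul_of_nonneg_right ?_ hΔν0
          have h10 := mul_le_mul_of_nonneg_right habs2 hV0
          rwa [one_mul] at h10
        have expand : |1 - 1/κ| * ‖vsc‖ * (S + Δν)
            = |1 - 1/κ| * (‖vsc‖ * S) + |1 - 1/κ| * ‖vsc‖ * Δν := by ring
        linarith [hv1, step, step2, expand]
      linarith [hu, hv, mul_nonneg hU0 hΔμ0]
    · -- κ < 1
      have hcmp : |1 - κ| ≤ |1 - 1/κ| := by
        rw [habs1, le_div_iff₀ hκ]
        have h10 := mul_le_mul_of_nonneg_left hk1.le (abs_nonneg (1 - κ))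
        rwa [mul_one] at h10
      have hv1 : (1 - 1/κ) * (∑ j, vsc j * ν j) ≤ |1 - 1/κ| * (‖vsc‖ * S) := by
        rw [Finset.mul_sum]
        calc (∑ j, (1 - 1/κ) * (vsc j * ν j))
            ≤ ∑ j, (|1 - 1/κ| * ‖vsc‖) * νsc j := by
              refine Finset.sum_le_sum fun j _ => ?_
              calc (1 - 1/κ) * (vsc j * ν j) ≤ |(1 - 1/κ) * (vsc j * ν j)| := le_abs_self _
                _ = |1 - 1/κ| * (|vsc j| * ν j) := by
                    rw [abs_mul, abs_mul, abs_of_pos (hνpos j)]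
                _ ≤ |1 - 1/κ| * (‖vsc‖ * ν j) :=
                    mul_le_mul_of_nonneg_left
                      (mul_le_mul_of_nonneg_right (hVb j) (hνpos j).le) (abs_nonneg _)
                _ ≤ |1 - 1/κ| * (‖vsc‖ * (κ * νsc j)) := by
                    refine mul_le_mul_of_nonneg_left
                      (mul_le_mul_of_nonneg_left (hstatJ j) hV0) (abs_nonneg _)
                _ = |1 - κ| * (‖vsc‖ * νsc j) := by rw [habs1]; field_simp
                _ ≤ (|1 - 1/κ| * ‖vsc‖) * νsc j := by
                    rw [← mul_assoc]
                    exact mul_le_mul_of_nonneg_right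
                      (mul_le_mul_of_nonneg_right hcmp hV0) (hνscpos j).le
          _ = |1 - 1/κ| * (‖vsc‖ * S) := by rw [← Finset.mul_sum, hSν, mul_assoc]
      have hu1 : (1 - κ) * (∑ i, usc i * μ i) ≤ |1 - κ| * ‖usc‖ := by
        rw [Finset.mul_sum]
        calc (∑ i, (1 - κ) * (usc i * μ i))
            ≤ ∑ i, (|1 - κ| * ‖usc‖) * μ i := by
              refine Finset.sum_le_sum fun i _ => ?_
              calc (1 - κ) * (usc i * μ i) ≤ |(1 - κ) * (usc i * μ i)| := le_abs_self _
                _ = |1 - κ| * (|usc i| * μ i) := by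
                    rw [abs_mul, abs_mul, abs_of_pos (hμpos i)]
                _ ≤ (|1 - κ| * ‖usc‖) * μ i := by
                    rw [mul_assoc]
                    exact mul_le_mul_of_nonneg_left
                      (mul_le_mul_of_nonneg_right (hUb i) (hμpos i).le) (abs_nonneg _)
          _ = |1 - κ| * ‖usc‖ := by rw [← Finset.mul_sum, hμsum, mul_one]
      have habs2 : |1 - κ| ≤ 1 := by
        rw [abs_of_nonneg (by linarith)]
        linarith
      have hu : (1 - κ) * (∑ i, usc i * μ i) ≤ |1 - κ| * (‖usc‖ * S) + ‖usc‖ * Δμ := by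
        have step : |1 - κ| * ‖usc‖ ≤ |1 - κ| * ‖usc‖ * (S + Δμ) := by
          have h10 := mul_le_mul_of_nonneg_left h1Sμ
            (mul_nonneg (abs_nonneg (1 - κ)) hU0)
          rwa [mul_one] at h10
        have step2 : |1 - κ| * ‖usc‖ * Δμ ≤ ‖usc‖ * Δμ := by
          refine mul_le_mul_of_nonneg_right ?_ hΔμ0
          have h10 := mul_le_mul_of_nonneg_right habs2 hU0
          rwa [one_mul] at h10
        have expand : |1 - κ| * ‖usc‖ * (S + Δμ)
            = |1 - κ| * (‖usc‖ * S) + |1 - κ| * ‖usc‖ * Δμ := by ring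
        linarith [hu1, step, step2, expand]
      linarith [hu, hv1, mul_nonneg hV0 hΔν0]
  -- final assembly
  rw [habsμ, habsν]
  set L : ℝ := Real.log ((max n m : ℝ) * ε ^ 2 / min μminI νminJ) with hLdef
  have hub : ((∑ i, ∑ j, Real.exp (usc i) * K i j * Real.exp (vsc j))
        - κ * (∑ i, usc i * μ i) - (1 / κ) * (∑ j, vsc j * ν j))
      - ((∑ i, ∑ j, Real.exp (ustar i) * K i j * Real.exp (vstar j))
        - (∑ i, ustar i * μ i) - (∑ j, vstar j * ν j))
      ≤ ((‖usc‖ + A) * Δμ + (‖vsc‖ + A) * Δν)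
        + (|1 - κ| * (‖usc‖ * S) + |1 - 1/κ| * (‖vsc‖ * S) + ‖usc‖ * Δμ + ‖vsc‖ * Δν) := by
    have hdec : ((∑ i, ∑ j, Real.exp (usc i) * K i j * Real.exp (vsc j))
        - κ * (∑ i, usc i * μ i) - (1 / κ) * (∑ j, vsc j * ν j))
      - ((∑ i, ∑ j, Real.exp (ustar i) * K i j * Real.exp (vstar j))
        - (∑ i, ustar i * μ i) - (∑ j, vstar j * ν j))
      = ((S - (∑ i, usc i * μ i) - (∑ j, vsc j * ν j))
          - ((∑ i, ∑ j, Real.exp (ustar i) * K i j * Real.exp (vstar j))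
            - (∑ i, ustar i * μ i) - (∑ j, vstar j * ν j)))
        + ((1 - κ) * (∑ i, usc i * μ i) + (1 - 1/κ) * (∑ j, vsc j * ν j)) := by
      rw [hSdef]; ring
    rw [hdec]
    exact add_le_add hgrad hP2
  refine le_trans hub ?_
  have hprod1 : 0 ≤ (A + 2*‖vsc‖ + 2*L) * Δμ := by
    have : 0 ≤ A + 2*‖vsc‖ + 2*L := by linarith
    exact mul_nonneg this hΔμ0
  have hprod2 : 0 ≤ (A + 2*‖usc‖ + 2*L) * Δν := by
    have : 0 ≤ A + 2*‖usc‖ + 2*L := by linarith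
    exact mul_nonneg this hΔν0
  have hprod3 : 0 ≤ |1 - κ| * Δμ := mul_nonneg (abs_nonneg _) hΔμ0
  have hprod4 : 0 ≤ |1 - 1/κ| * Δν := mul_nonneg (abs_nonneg _) hΔν0
  have hkey2 : (2 * (A + ‖usc‖ + ‖vsc‖ + L) * (Δμ + Δν)
        + |1 - κ| * (‖usc‖ * S + Δμ) + |1 - 1 / κ| * (‖vsc‖ * S + Δν))
      - ((((‖usc‖ + A) * Δμ + (‖vsc‖ + A) * Δν)
        + (|1 - κ| * (‖usc‖ * S) + |1 - 1/κ| * (‖vsc‖ * S) + ‖usc‖ * Δμ + ‖vsc‖ * Δν)))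
      = (A + 2*‖vsc‖ + 2*L) * Δμ + (A + 2*‖usc‖ + 2*L) * Δν
        + |1 - κ| * Δμ + |1 - 1/κ| * Δν := by ring
  linarith [hprod1, hprod2, hprod3, hprod4, hkey2]
end
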